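/- Let P be a noncommutative polynomial in two variables and let P(a,a†) denote the operator on ℂ[[z]] (with coefficients extended over ℂ[[t,ℏ]]) obtained by substituting a = ℏ·d/dz and a† = multiplication by z. Set H₀ = a†a = ℏ z d/dz. Then for every n ∈ ℕ there exist a unique E ∈ ℂ[[t,ℏ]] and a unique ψ ∈ ℂ[[z,t,ℏ]] such that (a†a + ℏt·P(a,a†))ψ = Eψ, ψ|_{t=0} = zⁿ, and the coefficient of zⁿ in ψ equals 1; one has E|_{t=0} = nℏ, and moreover E = Σ_{i,k} α_{ik} tⁱ ℏᵏ is of Gevrey class in ℏ: both its ℏ-Borel transform Σ_{i, k≥1} α_{ik} tⁱ ℏ^{k-1}/(k-1)! and its ℏ-free part Σ_i α_{i0} tⁱ are convergent power series on a neighbourhood of 0 ∈ ℂ². (Gevrey convergence of the Rayleigh–Schrödinger expansions for polynomial perturbations of the harmonic oscillator.) -/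

import Mathlib

open scoped Classical

noncomputable section

variable {σ : Type*} [DecidableEq σ]

/-- Build a multivariate formal power series from its coefficient function. -/
def ofCoeff (g : (σ →₀ ℕ) → ℂ) : MvPowerSeries σ ℂ := g

/-- The total degree of a monomial exponent. -/
def degOf (d : σ →₀ ℕ) : ℕ := d.sum fun _ n => n

/-- A formal power series is convergent (has a positive polyradius of convergence) iff
its coefficients grow at most geometrically. -/
def IsConv (f : MvPowerSeries σ ℂ) : Prop :=
  ∃ C R : ℝ, 0 < R ∧ ∀ d : σ →₀ ℕ, ‖MvPowerSeries.coeff (R := ℂ) d f‖ ≤ C * R ^ degOf d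

/-- The Borel transform with respect to the variable `h` (thought of as `ℏ`):
`Σ a_k ℏ^k ↦ Σ_{k ≥ 1} a_k ℏ^{k-1}/(k-1)!`, i.e. the coefficient of `ℏ^j` in `Bf` is
`a_{j+1}/j!` (the other variables being spectators). -/
def hborel (h : σ) (f : MvPowerSeries σ ℂ) : MvPowerSeries σ ℂ :=
  ofCoeff fun d => (1 / (d h).factorial : ℂ) *
    MvPowerSeries.coeff (R := ℂ) (d + Finsupp.single h 1) f

/-- The `ℏ`-free part of a series: the sum of the monomials not involving `h`. -/
def hfree (h : σ) (f : MvPowerSeries σ ℂ) : MvPowerSeries σ ℂ :=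
  ofCoeff fun d => if d h = 0 then MvPowerSeries.coeff (R := ℂ) d f else 0

/-- `f` is Borel-analytic (of Gevrey class) with respect to the variable `h`:
its `ℏ`-Borel transform and its `ℏ`-free part are convergent power series. -/
def BorelAnalytic (h : σ) (f : MvPowerSeries σ ℂ) : Prop :=
  IsConv (hborel h f) ∧ IsConv (hfree h f)

/-- `f` depends only on the variables in `S`. -/
def DependsOnlyOn (f : MvPowerSeries σ ℂ) (S : Set σ) : Prop :=
  ∀ d : σ →₀ ℕ, (∃ i ∉ S, d i ≠ 0) → MvPowerSeries.coeff (R := ℂ) d f = 0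

/-- The formal partial derivative `∂_i`. -/
def pdF (i : σ) (f : MvPowerSeries σ ℂ) : MvPowerSeries σ ℂ :=
  ofCoeff fun d => ((d i : ℕ) + 1 : ℂ) *
    MvPowerSeries.coeff (R := ℂ) (d + Finsupp.single i 1) f

/-- The normal-ordered (total symbol) product of the Heisenberg algebra
`[a, a†] = ℏ`, with `x` the symbol of `a†`, `y` the symbol of `a` and `h` that of `ℏ`:
`f ⋆ g = Σ_k (ℏ^k/k!) (∂_y^k f)(∂_x^k g)`.  All remaining variables are central. -/
def nstar (x y h : σ) (f g : MvPowerSeries σ ℂ) : MvPowerSeries σ ℂ :=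
  ofCoeff fun d => ∑ k ∈ Finset.range (d h + 1),
    (1 / k.factorial : ℂ) *
      MvPowerSeries.coeff (R := ℂ) (d - Finsupp.single h k) ((pdF y)^[k] f * (pdF x)^[k] g)

/-- Iterated `⋆`-powers: `f^{⋆0} = 1`, `f^{⋆(m+1)} = f ⋆ f^{⋆m}`. -/
def nstarPow (x y h : σ) (f : MvPowerSeries σ ℂ) : ℕ → MvPowerSeries σ ℂ
  | 0 => 1
  | m + 1 => nstar x y h f (nstarPow x y h f m)

/-- The coefficient of `z^m` in `ψ` (a series in the central variables),
`z` being the variable `zv`. -/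
def zslice (zv : σ) (ψ : MvPowerSeries σ ℂ) (m : ℕ) : MvPowerSeries σ ℂ :=
  ofCoeff fun d => if d zv = 0 then
    MvPowerSeries.coeff (R := ℂ) (d + Finsupp.single zv m) ψ else 0

/-- Substitution `ψ ∘ f = Σ_m α_m ⋆ f^{⋆m}` of an element `f` (with vanishing constant
coefficient) into the series `ψ = Σ_m α_m z^m`, `z` being the variable `zv` and the
`α_m` series in the central variables. -/
def zsubst (x y h zv : σ) (ψ f : MvPowerSeries σ ℂ) : MvPowerSeries σ ℂ :=
  ofCoeff fun d => ∑' m : ℕ,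
    MvPowerSeries.coeff (R := ℂ) d (nstar x y h (zslice zv ψ m) (nstarPow x y h f m))

end

/-! Variables: `0 = z`, `1 = t`, `2 = ℏ`.  The space `ℂ[[z]]`, with coefficients
extended over `ℂ[[t,ℏ]]`, is realized as `ℂ[[z,t,ℏ]]`; the annihilation operator is
`a = ℏ d/dz` and the creation operator `a†` is multiplication by `z`. -/

/-- The formal partial derivative `∂_i`, as a `ℂ`-linear endomorphism. -/
noncomputable def pdL (i : Fin 3) :
    MvPowerSeries (Fin 3) ℂ →ₗ[ℂ] MvPowerSeries (Fin 3) ℂ :=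
  LinearMap.pi fun d : Fin 3 →₀ ℕ =>
    ((d i : ℕ) + 1 : ℂ) • MvPowerSeries.coeff (R := ℂ) (d + Finsupp.single i 1)

/-- The annihilation operator `a = ℏ d/dz` on `ℂ[[z,t,ℏ]]`. -/
noncomputable def aOp : Module.End ℂ (MvPowerSeries (Fin 3) ℂ) :=
  (LinearMap.mulLeft ℂ (MvPowerSeries.X 2 : MvPowerSeries (Fin 3) ℂ)).comp (pdL 0)

/-- The creation operator `a†`: multiplication by `z`. -/
noncomputable def adagOp : Module.End ℂ (MvPowerSeries (Fin 3) ℂ) :=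
  LinearMap.mulLeft ℂ (MvPowerSeries.X 0 : MvPowerSeries (Fin 3) ℂ)

/-- Substitution of `(a, a†)` into a noncommutative polynomial `P` in two variables
(an element of the free algebra on two generators, the first standing for `a`, the
second for `a†`). -/
noncomputable def substOps (P : FreeAlgebra ℂ (Fin 2)) :
    Module.End ℂ (MvPowerSeries (Fin 3) ℂ) :=
  FreeAlgebra.lift ℂ (fun i : Fin 2 => if i = 0 then aOp else adagOp) P

/-- The perturbed harmonic oscillator `H_t = a†a + ℏ t P(a,a†)` applied to `ψ`. -/
noncomputable def oscOp (P : FreeAlgebra ℂ (Fin 2)) (ψ : MvPowerSeries (Fin 3) ℂ) :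
    MvPowerSeries (Fin 3) ℂ :=
  adagOp (aOp ψ) +
    (MvPowerSeries.X 2 * MvPowerSeries.X 1 : MvPowerSeries (Fin 3) ℂ) * substOps P ψ

/-- The Rayleigh–Schrödinger eigenvalue problem for `H_t = a†a + ℏ t P(a,a†)` and the
`n`-th eigenvalue: `E ∈ ℂ[[t,ℏ]]`, `(a†a + ℏtP(a,a†))ψ = Eψ`, `ψ|_{t=0} = z^n`, and
the coefficient of `z^n` in `ψ` (a series in `t,ℏ`) equals `1`. -/
def RSCond (P : FreeAlgebra ℂ (Fin 2)) (n : ℕ)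
    (p : MvPowerSeries (Fin 3) ℂ × MvPowerSeries (Fin 3) ℂ) : Prop :=
  DependsOnlyOn p.1 {1, 2} ∧
  oscOp P p.2 = p.1 * p.2 ∧
  (∀ d : Fin 3 →₀ ℕ, d 1 = 0 →
    MvPowerSeries.coeff (R := ℂ) d p.2 = if d = Finsupp.single 0 n then 1 else 0) ∧
  (∀ d : Fin 3 →₀ ℕ, d 0 = n →
    MvPowerSeries.coeff (R := ℂ) d p.2 = if d = Finsupp.single 0 n then 1 else 0)


namespace RS
abbrev MS := MvPowerSeries (Fin 3) ℂ

noncomputable def e3 (m i k : ℕ) : Fin 3 →₀ ℕ := Finsupp.equivFunOnFinite.symm ![m, i, k]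

@[simp] lemma e3_apply0 (m i k : ℕ) : e3 m i k 0 = m := rfl
@[simp] lemma e3_apply1 (m i k : ℕ) : e3 m i k 1 = i := rfl
@[simp] lemma e3_apply2 (m i k : ℕ) : e3 m i k 2 = k := rfl

lemma e3_eta (d : Fin 3 →₀ ℕ) : e3 (d 0) (d 1) (d 2) = d := by
  ext j
  fin_cases j <;> rfl

lemma e3_add (m i k m' i' k' : ℕ) : e3 m i k + e3 m' i' k' = e3 (m+m') (i+i') (k+k') := by
  ext j; fin_cases j <;> rfl

lemma e3_le (m i k m' i' k' : ℕ) : e3 m' i' k' ≤ e3 m i k ↔ m' ≤ m ∧ i' ≤ i ∧ k' ≤ k := by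
  constructor
  · intro h
    exact ⟨h 0, h 1, h 2⟩
  · intro ⟨h1, h2, h3⟩ j
    fin_cases j <;> assumption

lemma e3_sub (m i k m' i' k' : ℕ) : e3 m i k - e3 m' i' k' = e3 (m-m') (i-i') (k-k') := by
  ext j; fin_cases j <;> simp [Finsupp.tsub_apply]

lemma single0 (j : ℕ) : Finsupp.single (0 : Fin 3) j = e3 j 0 0 := by
  ext q; fin_cases q <;> simp [Finsupp.single_apply]
lemma single1 (j : ℕ) : Finsupp.single (1 : Fin 3) j = e3 0 j 0 := by
  ext q; fin_cases q <;> simp [Finsupp.single_apply]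
lemma single2 (j : ℕ) : Finsupp.single (2 : Fin 3) j = e3 0 0 j := by
  ext q; fin_cases q <;> simp [Finsupp.single_apply]

lemma e3_inj {m i k m' i' k' : ℕ} (h : e3 m i k = e3 m' i' k') : m = m' ∧ i = i' ∧ k = k' := by
  refine ⟨?_, ?_, ?_⟩
  · have := congrArg (fun d => (d : Fin 3 →₀ ℕ) 0) h; simpa using this
  · have := congrArg (fun d => (d : Fin 3 →₀ ℕ) 1) h; simpa using this
  · have := congrArg (fun d => (d : Fin 3 →₀ ℕ) 2) h; simpa using this

noncomputable def cf3 (m i k : ℕ) (f : MS) : ℂ := MvPowerSeries.coeff (R := ℂ) (e3 m i k) f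

lemma degOf_e3 (m i k : ℕ) : (e3 m i k).sum (fun _ n => n) = m + i + k := by
  rw [Finsupp.sum_fintype _ _ (fun _ => rfl), Fin.sum_univ_three]
  rfl

end RS
namespace RS
open MvPowerSeries Finset

lemma cf3_X2_mul (f : MS) (m i k : ℕ) :
    cf3 m i k (MvPowerSeries.X 2 * f) = if 1 ≤ k then cf3 m i (k-1) f else 0 := by
  unfold cf3
  rw [show (MvPowerSeries.X 2 : MS) = MvPowerSeries.monomial (R := ℂ) (Finsupp.single 2 1) 1 from rfl,
    MvPowerSeries.coeff_monomial_mul, single2]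
  by_cases h : 1 ≤ k
  · rw [if_pos ((e3_le m i k 0 0 1).mpr ⟨Nat.zero_le _, Nat.zero_le _, h⟩), e3_sub, one_mul,
      if_pos h, Nat.sub_zero, Nat.sub_zero]
  · rw [if_neg (fun hc => h ((e3_le m i k 0 0 1).mp hc).2.2), if_neg h]

lemma cf3_X1_mul (f : MS) (m i k : ℕ) :
    cf3 m i k (MvPowerSeries.X 1 * f) = if 1 ≤ i then cf3 m (i-1) k f else 0 := by
  unfold cf3
  rw [show (MvPowerSeries.X 1 : MS) = MvPowerSeries.monomial (R := ℂ) (Finsupp.single 1 1) 1 from rfl,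
    MvPowerSeries.coeff_monomial_mul, single1]
  by_cases h : 1 ≤ i
  · rw [if_pos ((e3_le m i k 0 1 0).mpr ⟨Nat.zero_le _, h, Nat.zero_le _⟩), e3_sub, one_mul,
      if_pos h, Nat.sub_zero, Nat.sub_zero]
  · rw [if_neg (fun hc => h ((e3_le m i k 0 1 0).mp hc).2.1), if_neg h]

lemma cf3_X0_mul (f : MS) (m i k : ℕ) :
    cf3 m i k (MvPowerSeries.X 0 * f) = if 1 ≤ m then cf3 (m-1) i k f else 0 := by
  unfold cf3
  rw [show (MvPowerSeries.X 0 : MS) = MvPowerSeries.monomial (R := ℂ) (Finsupp.single 0 1) 1 from rfl,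
    MvPowerSeries.coeff_monomial_mul, single0]
  by_cases h : 1 ≤ m
  · rw [if_pos ((e3_le m i k 1 0 0).mpr ⟨h, Nat.zero_le _, Nat.zero_le _⟩), e3_sub, one_mul,
      if_pos h, Nat.sub_zero, Nat.sub_zero]
  · rw [if_neg (fun hc => h ((e3_le m i k 1 0 0).mp hc).1), if_neg h]

lemma cf3_pdL0 (f : MS) (m i k : ℕ) :
    cf3 m i k (pdL 0 f) = ((m : ℂ) + 1) * cf3 (m+1) i k f := by
  have h0 : cf3 m i k (pdL 0 f)
      = ((e3 m i k 0 : ℕ) + 1 : ℂ) • MvPowerSeries.coeff (R := ℂ) (e3 m i k + Finsupp.single 0 1) f :=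
    rfl
  rw [h0, single0, e3_add, e3_apply0, smul_eq_mul]
  rfl

lemma cf3_aOp (f : MS) (m i k : ℕ) :
    cf3 m i k (aOp f) = if 1 ≤ k then ((m : ℂ) + 1) * cf3 (m+1) i (k-1) f else 0 := by
  show cf3 m i k (MvPowerSeries.X 2 * pdL 0 f) = _
  rw [cf3_X2_mul]
  by_cases h : 1 ≤ k
  · rw [if_pos h, if_pos h, cf3_pdL0]
  · rw [if_neg h, if_neg h]

lemma cf3_adag_aOp (f : MS) (m i k : ℕ) :
    cf3 m i k (adagOp (aOp f)) = if 1 ≤ k then (m : ℂ) * cf3 m i (k-1) f else 0 := by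
  show cf3 m i k (MvPowerSeries.X 0 * aOp f) = _
  rw [cf3_X0_mul]
  by_cases hm : 1 ≤ m
  · rw [if_pos hm, cf3_aOp]
    by_cases h : 1 ≤ k
    · rw [if_pos h, if_pos h]
      have h1 : m - 1 + 1 = m := Nat.succ_pred_eq_of_pos hm
      rw [h1]
      congr 1
      rw [Nat.cast_sub hm, Nat.cast_one]
      ring
    · rw [if_neg h, if_neg h]
  · rw [if_neg hm]
    have hm0 : m = 0 := by omega
    subst hm0
    by_cases h : 1 ≤ k
    · rw [if_pos h, Nat.cast_zero, zero_mul]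
    · rw [if_neg h]

lemma cf3_mul_depends (f g : MS) (hf : ∀ d : Fin 3 →₀ ℕ, d 0 ≠ 0 → MvPowerSeries.coeff (R := ℂ) d f = 0)
    (m i k : ℕ) :
    cf3 m i k (f * g) = ∑ i' ∈ Finset.range (i+1), ∑ k' ∈ Finset.range (k+1),
      cf3 0 i' k' f * cf3 m (i-i') (k-k') g := by
  unfold cf3
  rw [MvPowerSeries.coeff_mul]
  rw [← Finset.sum_filter_of_ne (p := fun p : (Fin 3 →₀ ℕ) × (Fin 3 →₀ ℕ) => p.1 0 = 0)
    (by intro p _ hp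
        by_contra h0
        exact hp (by rw [hf p.1 h0, zero_mul]))]
  rw [← Finset.sum_product']
  refine Finset.sum_bij' (fun p _ => ((p.1 1 : ℕ), (p.1 2 : ℕ)))
    (fun q _ => (e3 0 q.1 q.2, e3 m (i - q.1) (k - q.2))) ?_ ?_ ?_ ?_ ?_
  · intro p hp
    simp only [Finset.mem_filter, Finset.HasAntidiagonal.mem_antidiagonal] at hp
    have h1 : p.1 1 + p.2 1 = i := by
      have := congrArg (fun d => (d : Fin 3 →₀ ℕ) 1) hp.1; simpa using this
    have h2 : p.1 2 + p.2 2 = k := by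
      have := congrArg (fun d => (d : Fin 3 →₀ ℕ) 2) hp.1; simpa using this
    simp only [Finset.mem_product, Finset.mem_range]
    omega
  · intro q hq
    simp only [Finset.mem_product, Finset.mem_range] at hq
    simp only [Finset.mem_filter, Finset.HasAntidiagonal.mem_antidiagonal]
    refine ⟨?_, rfl⟩
    rw [e3_add,
      show 0 + m = m by omega, show q.1 + (i - q.1) = i by omega,
      show q.2 + (k - q.2) = k by omega]
  · intro p hp
    simp only [Finset.mem_filter, Finset.HasAntidiagonal.mem_antidiagonal] at hp
    have hp0 : p.1 0 = 0 := hp.2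
    have hsum : p.1 + p.2 = e3 m i k := hp.1
    have hps : ∀ j, p.1 j + p.2 j = e3 m i k j := fun j => by
      have := congrArg (fun d => (d : Fin 3 →₀ ℕ) j) hsum; simpa using this
    have e1 : e3 0 (p.1 1) (p.1 2) = p.1 := by
      rw [← hp0]; exact e3_eta p.1
    have e2 : e3 m (i - p.1 1) (k - p.1 2) = p.2 := by
      have h0 := hps 0; have h1 := hps 1; have h2 := hps 2
      simp only [e3_apply0, e3_apply1, e3_apply2] at h0 h1 h2
      rw [show m = p.2 0 by omega, show i - p.1 1 = p.2 1 by omega,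
        show k - p.1 2 = p.2 2 by omega, e3_eta]
    exact Prod.ext e1 e2
  · intro q hq
    rfl
  · intro p hp
    simp only [Finset.mem_filter, Finset.HasAntidiagonal.mem_antidiagonal] at hp
    have hp0 : p.1 0 = 0 := hp.2
    have hps : ∀ j, p.1 j + p.2 j = e3 m i k j := fun j => by
      have := congrArg (fun d => (d : Fin 3 →₀ ℕ) j) hp.1; simpa using this
    have e1 : e3 0 (p.1 1) (p.1 2) = p.1 := by rw [← hp0]; exact e3_eta p.1
    have e2 : e3 m (i - p.1 1) (k - p.1 2) = p.2 := by
      have h0 := hps 0; have h1 := hps 1; have h2 := hps 2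
      simp only [e3_apply0, e3_apply1, e3_apply2] at h0 h1 h2
      rw [show m = p.2 0 by omega, show i - p.1 1 = p.2 1 by omega,
        show k - p.1 2 = p.2 2 by omega, e3_eta]
    rw [e1, e2]

end RS

namespace RS
open MvPowerSeries Finset

lemma cf3_add (f g : MS) (m i k : ℕ) : cf3 m i k (f + g) = cf3 m i k f + cf3 m i k g := by
  unfold cf3; exact map_add _ _ _

lemma cf3_smul (r : ℂ) (f : MS) (m i k : ℕ) : cf3 m i k (r • f) = r * cf3 m i k f := by
  unfold cf3; rw [map_smul, smul_eq_mul]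

/-- agreement of two series at `t`-level `i` -/
def Lvl (i : ℕ) (ψ φ : MS) : Prop := ∀ m k, cf3 m i k ψ = cf3 m i k φ

/-- the operator acts levelwise in `t` -/
def P1 (T : Module.End ℂ MS) : Prop := ∀ i ψ φ, Lvl i ψ φ → Lvl i (T ψ) (T φ)

/-- the grid majorant sum -/
noncomputable def gsum (L : ℕ) (ψ : MS) (m i k : ℕ) : ℝ :=
  ∑ r ∈ range (L+1), ∑ s ∈ range (2*L+1),
    (if L ≤ m + s ∧ r ≤ k then ((m:ℝ)+L)^r * ‖cf3 (m+s-L) i (k-r) ψ‖ else 0)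

lemma gsum_term_nonneg (L : ℕ) (ψ : MS) (m i k r s : ℕ) :
    0 ≤ (if L ≤ m + s ∧ r ≤ k then ((m:ℝ)+L)^r * ‖cf3 (m+s-L) i (k-r) ψ‖ else 0) := by
  split
  · positivity
  · exact le_refl 0

lemma gsum_nonneg (L : ℕ) (ψ : MS) (m i k : ℕ) : 0 ≤ gsum L ψ m i k := by
  apply Finset.sum_nonneg; intro r _; apply Finset.sum_nonneg; intro s _
  exact gsum_term_nonneg L ψ m i k r s

lemma le_grid_sum {t : ℕ → ℕ → ℝ} (ht : ∀ r s, 0 ≤ t r s) {r0 s0 R S : ℕ}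
    (hr : r0 < R) (hs : s0 < S) : t r0 s0 ≤ ∑ r ∈ range R, ∑ s ∈ range S, t r s := by
  calc t r0 s0 ≤ ∑ s ∈ range S, t r0 s := by
        apply Finset.single_le_sum (fun s _ => ht r0 s) (Finset.mem_range.mpr hs)
    _ ≤ ∑ r ∈ range R, ∑ s ∈ range S, t r s := by
        apply Finset.single_le_sum (f := fun r => ∑ s ∈ range S, t r s)
          (fun r _ => Finset.sum_nonneg fun s _ => ht r s) (Finset.mem_range.mpr hr)

/-- the banded-operator bound -/
def P3 (T : Module.End ℂ MS) (L : ℕ) (C : ℝ) : Prop :=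
  ∀ ψ m i k, ‖cf3 m i k (T ψ)‖ ≤ C * gsum L ψ m i k

def Tame (T : Module.End ℂ MS) : Prop :=
  P1 T ∧ ∃ L : ℕ, ∃ C : ℝ, 1 ≤ L ∧ 0 ≤ C ∧ P3 T L C

lemma gsum_mono (L L' : ℕ) (hL : L ≤ L') (ψ : MS) (m i k : ℕ) :
    gsum L ψ m i k ≤ gsum L' ψ m i k := by
  unfold gsum
  have step1 : ∀ r, ∑ s ∈ range (2*L+1),
      (if L ≤ m + s ∧ r ≤ k then ((m:ℝ)+L)^r * ‖cf3 (m+s-L) i (k-r) ψ‖ else 0)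
      ≤ ∑ s ∈ range (2*L'+1),
      (if L' ≤ m + s ∧ r ≤ k then ((m:ℝ)+L')^r * ‖cf3 (m+s-L') i (k-r) ψ‖ else 0) := by
    intro r
    have key : ∀ s ∈ range (2*L+1),
        (if L ≤ m + s ∧ r ≤ k then ((m:ℝ)+L)^r * ‖cf3 (m+s-L) i (k-r) ψ‖ else 0)
        ≤ (if L' ≤ m + (s + (L'-L)) ∧ r ≤ k then
            ((m:ℝ)+L')^r * ‖cf3 (m+(s+(L'-L))-L') i (k-r) ψ‖ else 0) := by
      intro s _
      by_cases h : L ≤ m + s ∧ r ≤ k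
      · rw [if_pos h, if_pos ⟨by omega, h.2⟩, show m+(s+(L'-L))-L' = m+s-L by omega]
        apply mul_le_mul_of_nonneg_right _ (norm_nonneg _)
        apply pow_le_pow_left₀ (by positivity)
        have : (L:ℝ) ≤ L' := by exact_mod_cast hL
        linarith
      · rw [if_neg h]
        exact gsum_term_nonneg L' ψ m i k r (s + (L'-L))
    calc ∑ s ∈ range (2*L+1), _ ≤ ∑ s ∈ range (2*L+1),
          (if L' ≤ m + (s + (L'-L)) ∧ r ≤ k then
            ((m:ℝ)+L')^r * ‖cf3 (m+(s+(L'-L))-L') i (k-r) ψ‖ else 0) :=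
          Finset.sum_le_sum key
      _ = ∑ s ∈ Finset.Ico (L'-L) (2*L+1+(L'-L)),
          (if L' ≤ m + s ∧ r ≤ k then ((m:ℝ)+L')^r * ‖cf3 (m+s-L') i (k-r) ψ‖ else 0) := by
          rw [Finset.sum_Ico_eq_sum_range]
          apply Finset.sum_congr (by congr 1; omega)
          intro s _
          rw [add_comm (L'-L) s]
      _ ≤ ∑ s ∈ range (2*L'+1),
          (if L' ≤ m + s ∧ r ≤ k then ((m:ℝ)+L')^r * ‖cf3 (m+s-L') i (k-r) ψ‖ else 0) := by
          apply Finset.sum_le_sum_of_subset_of_nonneg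
          · intro x hx
            simp only [Finset.mem_Ico] at hx
            simp only [Finset.mem_range]
            omega
          · intro x _ _
            exact gsum_term_nonneg L' ψ m i k r x
  calc ∑ r ∈ range (L+1), _ ≤ ∑ r ∈ range (L+1), ∑ s ∈ range (2*L'+1),
        (if L' ≤ m + s ∧ r ≤ k then ((m:ℝ)+L')^r * ‖cf3 (m+s-L') i (k-r) ψ‖ else 0) :=
        Finset.sum_le_sum (fun r _ => step1 r)
    _ ≤ _ := by
        apply Finset.sum_le_sum_of_subset_of_nonneg
        · intro x hx; simp only [Finset.mem_range] at *; omega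
        · intro r _ _
          exact Finset.sum_nonneg fun s _ => gsum_term_nonneg L' ψ m i k r s

lemma P3_mono {T L C L' C'} (h : P3 T L C) (hL : L ≤ L') (hC : C ≤ C') (hC0 : 0 ≤ C) :
    P3 T L' C' := by
  intro ψ m i k
  calc ‖cf3 m i k (T ψ)‖ ≤ C * gsum L ψ m i k := h ψ m i k
    _ ≤ C' * gsum L' ψ m i k := by
        apply mul_le_mul hC (gsum_mono L L' hL ψ m i k) (gsum_nonneg _ _ _ _ _)
        linarith [gsum_nonneg L' ψ m i k]

end RS

namespace RS
open MvPowerSeries Finset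

lemma mul_gsum_expand (w : ℝ) {R S : ℕ} (t : ℕ → ℕ → ℝ) :
    w * ∑ r ∈ Finset.range R, ∑ s ∈ Finset.range S, t r s
      = ∑ r ∈ Finset.range R, ∑ s ∈ Finset.range S, w * t r s := by
  rw [Finset.mul_sum]; exact Finset.sum_congr rfl fun r _ => Finset.mul_sum _ _ _

lemma single_le_gsum (L : ℕ) (ψ : MS) (m i k r0 s0 : ℕ) (hr : r0 < L+1) (hs : s0 < 2*L+1) :
    (if L ≤ m + s0 ∧ r0 ≤ k then ((m:ℝ)+L)^r0 * ‖cf3 (m+s0-L) i (k-r0) ψ‖ else 0)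
      ≤ gsum L ψ m i k := by
  unfold gsum
  exact le_grid_sum (fun r s => gsum_term_nonneg L ψ m i k r s) hr hs

lemma cf3_adagOp (f : MS) (m i k : ℕ) :
    cf3 m i k (adagOp f) = if 1 ≤ m then cf3 (m-1) i k f else 0 := cf3_X0_mul f m i k

lemma P1_comp {T₁ T₂} (h1 : P1 T₁) (h2 : P1 T₂) : P1 (T₁ * T₂) := by
  intro i ψ φ h
  have := h1 i (T₂ ψ) (T₂ φ) (h2 i ψ φ h)
  intro m k
  simpa [Module.End.mul_apply] using this m k

lemma tame_add {T₁ T₂} (h1 : Tame T₁) (h2 : Tame T₂) : Tame (T₁ + T₂) := by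
  obtain ⟨p1, L₁, C₁, hL₁, hC₁, h3₁⟩ := h1
  obtain ⟨p2, L₂, C₂, hL₂, hC₂, h3₂⟩ := h2
  refine ⟨?_, max L₁ L₂, C₁ + C₂, le_trans hL₁ (le_max_left _ _), by linarith, ?_⟩
  · intro i ψ φ h m k
    simp only [LinearMap.add_apply, cf3_add]
    rw [p1 i ψ φ h m k, p2 i ψ φ h m k]
  · intro ψ m i k
    have b1 := P3_mono h3₁ (le_max_left L₁ L₂) (le_refl C₁) hC₁ ψ m i k
    have b2 := P3_mono h3₂ (le_max_right L₁ L₂) (le_refl C₂) hC₂ ψ m i k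
    calc ‖cf3 m i k ((T₁ + T₂) ψ)‖ = ‖cf3 m i k (T₁ ψ) + cf3 m i k (T₂ ψ)‖ := by
          rw [LinearMap.add_apply, cf3_add]
      _ ≤ ‖cf3 m i k (T₁ ψ)‖ + ‖cf3 m i k (T₂ ψ)‖ := norm_add_le _ _
      _ ≤ (C₁ + C₂) * gsum (max L₁ L₂) ψ m i k := by rw [add_mul]; exact add_le_add b1 b2

lemma tame_mul {T₁ T₂} (h1 : Tame T₁) (h2 : Tame T₂) : Tame (T₁ * T₂) := by
  obtain ⟨p1, L₁, C₁, hL₁, hC₁, h3₁⟩ := h1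
  obtain ⟨p2, L₂, C₂, hL₂, hC₂, h3₂⟩ := h2
  set L := L₁ + L₂ with hLdef
  set N₂ : ℝ := ((L₂+1) : ℕ) * ((2*L₂+1) : ℕ) with hN2def
  set N₁ : ℝ := ((L₁+1) : ℕ) * ((2*L₁+1) : ℕ) with hN1def
  have hN₂ : 0 ≤ N₂ := by positivity
  have hN₁ : 0 ≤ N₁ := by positivity
  refine ⟨P1_comp p1 p2, L, C₁ * N₁ * (C₂ * N₂), by omega, by positivity, ?_⟩
  intro ψ m i k
  set S := gsum L ψ m i k with hSdef
  have hS : 0 ≤ S := gsum_nonneg _ _ _ _ _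
  -- each term of the outer grid is bounded by C₂ * N₂ * S
  have hterm : ∀ r₁ ∈ range (L₁+1), ∀ s₁ ∈ range (2*L₁+1),
      (if L₁ ≤ m + s₁ ∧ r₁ ≤ k then ((m:ℝ)+L₁)^r₁ * ‖cf3 (m+s₁-L₁) i (k-r₁) (T₂ ψ)‖ else 0)
        ≤ C₂ * N₂ * S := by
    intro r₁ hr₁ s₁ hs₁
    rw [Finset.mem_range] at hr₁ hs₁
    by_cases hg : L₁ ≤ m + s₁ ∧ r₁ ≤ k
    · rw [if_pos hg]
      set μ := m + s₁ - L₁ with hμdef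
      set κ := k - r₁ with hκdef
      have inner : ∀ r₂ ∈ range (L₂+1), ∀ s₂ ∈ range (2*L₂+1),
          ((m:ℝ)+L₁)^r₁ *
            (if L₂ ≤ μ + s₂ ∧ r₂ ≤ κ then ((μ:ℝ)+L₂)^r₂ * ‖cf3 (μ+s₂-L₂) i (κ-r₂) ψ‖ else 0)
          ≤ S := by
        intro r₂ hr₂ s₂ hs₂
        rw [Finset.mem_range] at hr₂ hs₂
        by_cases hg2 : L₂ ≤ μ + s₂ ∧ r₂ ≤ κ
        · rw [if_pos hg2]
          have hidx : μ + s₂ - L₂ = m + (s₁ + s₂) - L := by omega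
          have hidx2 : κ - r₂ = k - (r₁ + r₂) := by omega
          have hw : ((m:ℝ)+L₁)^r₁ * (((μ:ℝ)+L₂)^r₂) ≤ ((m:ℝ)+L)^(r₁+r₂) := by
            rw [pow_add]
            apply mul_le_mul _ _ (by positivity) (by positivity)
            · apply pow_le_pow_left₀ (by positivity)
              have : (L₁:ℝ) ≤ L := by exact_mod_cast Nat.le_add_right L₁ L₂
              linarith
            · apply pow_le_pow_left₀ (by positivity)
              have hμle : μ ≤ m + L₁ := by omega
              have : (μ:ℝ) ≤ (m:ℝ) + L₁ := by exact_mod_cast hμle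
              have : ((L₁:ℝ) + L₂) = (L:ℝ) := by exact_mod_cast rfl
              push_cast
              push_cast at this
              linarith
          calc ((m:ℝ)+L₁)^r₁ * (((μ:ℝ)+L₂)^r₂ * ‖cf3 (μ+s₂-L₂) i (κ-r₂) ψ‖)
              = (((m:ℝ)+L₁)^r₁ * ((μ:ℝ)+L₂)^r₂) * ‖cf3 (m+(s₁+s₂)-L) i (k-(r₁+r₂)) ψ‖ := by
                rw [hidx, hidx2]; ring
            _ ≤ ((m:ℝ)+L)^(r₁+r₂) * ‖cf3 (m+(s₁+s₂)-L) i (k-(r₁+r₂)) ψ‖ :=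
                mul_le_mul_of_nonneg_right hw (norm_nonneg _)
            _ = (if L ≤ m + (s₁+s₂) ∧ r₁+r₂ ≤ k then
                  ((m:ℝ)+L)^(r₁+r₂) * ‖cf3 (m+(s₁+s₂)-L) i (k-(r₁+r₂)) ψ‖ else 0) := by
                rw [if_pos (by omega)]
            _ ≤ S := by
                rw [hSdef]
                exact single_le_gsum L ψ m i k (r₁+r₂) (s₁+s₂) (by omega) (by omega)
        · rw [if_neg hg2, mul_zero]
          exact hS
      calc ((m:ℝ)+L₁)^r₁ * ‖cf3 μ i κ (T₂ ψ)‖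
          ≤ ((m:ℝ)+L₁)^r₁ * (C₂ * gsum L₂ ψ μ i κ) :=
            mul_le_mul_of_nonneg_left (h3₂ ψ μ i κ) (by positivity)
        _ = C₂ * ∑ r₂ ∈ range (L₂+1), ∑ s₂ ∈ range (2*L₂+1), ((m:ℝ)+L₁)^r₁ *
              (if L₂ ≤ μ + s₂ ∧ r₂ ≤ κ then ((μ:ℝ)+L₂)^r₂ * ‖cf3 (μ+s₂-L₂) i (κ-r₂) ψ‖ else 0) := by
            have hg : gsum L₂ ψ μ i κ = ∑ r₂ ∈ range (L₂+1), ∑ s₂ ∈ range (2*L₂+1),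
                (if L₂ ≤ μ + s₂ ∧ r₂ ≤ κ then
                  ((μ:ℝ)+L₂)^r₂ * ‖cf3 (μ+s₂-L₂) i (κ-r₂) ψ‖ else 0) := rfl
            rw [hg, ← mul_gsum_expand]
            ring
        _ ≤ C₂ * ∑ r₂ ∈ range (L₂+1), ∑ s₂ ∈ range (2*L₂+1), S := by
            apply mul_le_mul_of_nonneg_left _ hC₂
            apply Finset.sum_le_sum
            intro r₂ hr₂
            apply Finset.sum_le_sum
            intro s₂ hs₂
            exact inner r₂ hr₂ s₂ hs₂
        _ = C₂ * (N₂ * S) := by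
            rw [Finset.sum_const, Finset.sum_const, Finset.card_range, Finset.card_range]
            simp only [nsmul_eq_mul, hN2def]
            push_cast
            ring
        _ = C₂ * N₂ * S := by ring
    · rw [if_neg hg]
      positivity
  calc ‖cf3 m i k ((T₁ * T₂) ψ)‖ = ‖cf3 m i k (T₁ (T₂ ψ))‖ := by rw [Module.End.mul_apply]
    _ ≤ C₁ * gsum L₁ (T₂ ψ) m i k := h3₁ (T₂ ψ) m i k
    _ ≤ C₁ * (N₁ * (C₂ * N₂ * S)) := by
        apply mul_le_mul_of_nonneg_left _ hC₁
        calc gsum L₁ (T₂ ψ) m i k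
            ≤ ∑ r₁ ∈ range (L₁+1), ∑ s₁ ∈ range (2*L₁+1), C₂ * N₂ * S := by
              apply Finset.sum_le_sum
              intro r₁ hr₁
              apply Finset.sum_le_sum
              intro s₁ hs₁
              exact hterm r₁ hr₁ s₁ hs₁
          _ = N₁ * (C₂ * N₂ * S) := by
              rw [Finset.sum_const, Finset.sum_const, Finset.card_range, Finset.card_range]
              simp only [nsmul_eq_mul, hN1def]
              push_cast
              ring
    _ = C₁ * N₁ * (C₂ * N₂) * S := by ring

lemma tame_algebraMap (c : ℂ) : Tame (algebraMap ℂ (Module.End ℂ MS) c) := by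
  refine ⟨?_, 1, ‖c‖, le_refl 1, norm_nonneg c, ?_⟩
  · intro i ψ φ h m k
    rw [Module.algebraMap_end_apply, Module.algebraMap_end_apply, cf3_smul, cf3_smul, h m k]
  · intro ψ m i k
    rw [Module.algebraMap_end_apply, cf3_smul, norm_mul]
    apply mul_le_mul_of_nonneg_left _ (norm_nonneg c)
    refine le_trans ?_ (single_le_gsum 1 ψ m i k 0 1 (by omega) (by omega))
    rw [if_pos (⟨by omega, by omega⟩ : (1:ℕ) ≤ m + 1 ∧ (0:ℕ) ≤ k), pow_zero, one_mul]
    simp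

lemma tame_aOp : Tame aOp := by
  refine ⟨?_, 1, 1, le_refl 1, zero_le_one, ?_⟩
  · intro i ψ φ h m k
    rw [cf3_aOp, cf3_aOp]
    by_cases hk : 1 ≤ k
    · rw [if_pos hk, if_pos hk, h (m+1) (k-1)]
    · rw [if_neg hk, if_neg hk]
  · intro ψ m i k
    rw [cf3_aOp, one_mul]
    by_cases hk : 1 ≤ k
    · rw [if_pos hk]
      refine le_trans ?_ (single_le_gsum 1 ψ m i k 1 2 (by omega) (by omega))
      rw [if_pos (⟨by omega, hk⟩ : (1:ℕ) ≤ m + 2 ∧ 1 ≤ k), pow_one]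
      rw [norm_mul, show ((m:ℂ)+1) = ((m+1 : ℕ) : ℂ) by push_cast; ring, Complex.norm_natCast]
      apply le_of_eq
      push_cast
      ring_nf
    · rw [if_neg hk, norm_zero]
      exact gsum_nonneg _ _ _ _ _

lemma tame_adagOp : Tame adagOp := by
  refine ⟨?_, 1, 1, le_refl 1, zero_le_one, ?_⟩
  · intro i ψ φ h m k
    rw [cf3_adagOp, cf3_adagOp]
    by_cases hm : 1 ≤ m
    · rw [if_pos hm, if_pos hm, h (m-1) k]
    · rw [if_neg hm, if_neg hm]
  · intro ψ m i k
    rw [cf3_adagOp, one_mul]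
    by_cases hm : 1 ≤ m
    · rw [if_pos hm]
      refine le_trans ?_ (single_le_gsum 1 ψ m i k 0 0 (by omega) (by omega))
      rw [if_pos (⟨by omega, by omega⟩ : (1:ℕ) ≤ m + 0 ∧ (0:ℕ) ≤ k), pow_zero, one_mul]
      simp
    · rw [if_neg hm, norm_zero]
      exact gsum_nonneg _ _ _ _ _

lemma tame_substOps (P : FreeAlgebra ℂ (Fin 2)) : Tame (substOps P) := by
  show Tame ((FreeAlgebra.lift ℂ (fun i : Fin 2 => if i = 0 then aOp else adagOp)) P)
  induction P using FreeAlgebra.induction with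
  | grade0 r => rw [AlgHom.commutes]; exact tame_algebraMap r
  | grade1 x =>
      rw [FreeAlgebra.lift_ι_apply]
      by_cases hx : x = 0
      · rw [if_pos hx]; exact tame_aOp
      · rw [if_neg hx]; exact tame_adagOp
  | mul a b ha hb => rw [map_mul]; exact tame_mul ha hb
  | add a b ha hb => rw [map_add]; exact tame_add ha hb

end RS

namespace RS
open MvPowerSeries Finset

lemma cf3_osc (P : FreeAlgebra ℂ (Fin 2)) (ψ : MS) (m i k : ℕ) :
    cf3 m i k (oscOp P ψ) =
      (if 1 ≤ k then (m:ℂ) * cf3 m i (k-1) ψ else 0) +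
      (if 1 ≤ i ∧ 1 ≤ k then cf3 m (i-1) (k-1) (substOps P ψ) else 0) := by
  have h0 : oscOp P ψ = adagOp (aOp ψ) +
      (MvPowerSeries.X 2 * (MvPowerSeries.X 1 * substOps P ψ)) := by
    rw [oscOp, mul_assoc]
  rw [h0, cf3_add, cf3_adag_aOp, cf3_X2_mul]
  congr 1
  by_cases hk : 1 ≤ k
  · rw [if_pos hk, cf3_X1_mul]
    by_cases hi : 1 ≤ i
    · rw [if_pos hi, if_pos ⟨hi, hk⟩]
    · rw [if_neg hi, if_neg (fun hc => hi hc.1)]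
  · rw [if_neg hk, if_neg (fun hc => hk hc.2)]

/-- the coefficientwise eigenvalue equation -/
def eqc (Pp : FreeAlgebra ℂ (Fin 2)) (E ψ : MS) (m i k : ℕ) : Prop :=
  (if 1 ≤ k then (m:ℂ) * cf3 m i (k-1) ψ else 0) +
  (if 1 ≤ i ∧ 1 ≤ k then cf3 m (i-1) (k-1) (substOps Pp ψ) else 0) =
  ∑ i' ∈ Finset.range (i+1), ∑ k' ∈ Finset.range (k+1),
    cf3 0 i' k' E * cf3 m (i-i') (k-k') ψ

lemma osc_iff (Pp : FreeAlgebra ℂ (Fin 2)) (E ψ : MS)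
    (hE : ∀ d : Fin 3 →₀ ℕ, d 0 ≠ 0 → MvPowerSeries.coeff (R := ℂ) d E = 0) :
    oscOp Pp ψ = E * ψ ↔ ∀ m i k, eqc Pp E ψ m i k := by
  constructor
  · intro h m i k
    unfold eqc
    rw [← cf3_osc, ← cf3_mul_depends E ψ hE]
    show MvPowerSeries.coeff (R := ℂ) _ _ = MvPowerSeries.coeff (R := ℂ) _ _
    rw [h]
  · intro h
    apply MvPowerSeries.ext
    intro d
    have := h (d 0) (d 1) (d 2)
    unfold eqc at this
    rw [← cf3_osc, ← cf3_mul_depends E ψ hE] at this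
    unfold cf3 at this
    rw [e3_eta] at this
    exact this

section Construction

variable (P : FreeAlgebra ℂ (Fin 2)) (n : ℕ)

noncomputable def hist : ℕ → ((ℕ → ℕ → ℕ → ℂ) × (ℕ → ℕ → ℂ))
  | 0 => (fun m j k => if j = 0 then (if m = n ∧ k = 0 then 1 else 0) else 0,
          fun j k => if j = 0 then (if k = 1 then (n:ℂ) else 0) else 0)
  | (i+1) =>
      (fun m j k =>
        if j = i+1 then
          (if m = n then 0 else
            ((m:ℂ) - n)⁻¹ *
              ((∑ i' ∈ Finset.Icc 1 i, ∑ k' ∈ Finset.range (k+2),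
                 (hist i).2 i' k' * (hist i).1 m (i+1-i') (k+1-k')) -
               cf3 m i k (substOps P (ofCoeff
                 (fun d => if d 1 = i then (hist i).1 (d 0) i (d 2) else 0)))))
        else (hist i).1 m j k,
       fun j k =>
        if j = i+1 then
          (if k = 0 then 0 else
            cf3 n i (k-1) (substOps P (ofCoeff
              (fun d => if d 1 = i then (hist i).1 (d 0) i (d 2) else 0))))
        else (hist i).2 j k)

noncomputable def psiC (m i k : ℕ) : ℂ := (hist P n i).1 m i k
noncomputable def EC (i k : ℕ) : ℂ := (hist P n i).2 i k
noncomputable def PsiS : MS := ofCoeff fun d => psiC P n (d 0) (d 1) (d 2)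
noncomputable def ES : MS := ofCoeff fun d => if d 0 = 0 then EC P n (d 1) (d 2) else 0
noncomputable def sliceS (i : ℕ) : MS :=
  ofCoeff fun d => if d 1 = i then psiC P n (d 0) i (d 2) else 0

lemma hist_fst_stable : ∀ i j, j ≤ i → ∀ m k, (hist P n i).1 m j k = psiC P n m j k := by
  intro i
  induction i with
  | zero => intro j hj m k; interval_cases j; rfl
  | succ i ih =>
      intro j hj m k
      by_cases hji : j = i + 1
      · subst hji; rfl
      · have hj' : j ≤ i := by omega
        show (hist P n (i+1)).1 m j k = _
        rw [show (hist P n (i+1)).1 m j k = (hist P n i).1 m j k by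
          rw [hist]; simp only [if_neg hji]]
        exact ih j hj' m k

lemma hist_snd_stable : ∀ i j, j ≤ i → ∀ k, (hist P n i).2 j k = EC P n j k := by
  intro i
  induction i with
  | zero => intro j hj k; interval_cases j; rfl
  | succ i ih =>
      intro j hj k
      by_cases hji : j = i + 1
      · subst hji; rfl
      · have hj' : j ≤ i := by omega
        rw [show (hist P n (i+1)).2 j k = (hist P n i).2 j k by
          rw [hist]; simp only [if_neg hji]]
        exact ih j hj' k

lemma psiC_zero (m k : ℕ) : psiC P n m 0 k = if m = n ∧ k = 0 then 1 else 0 := rfl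

lemma EC_zero (k : ℕ) : EC P n 0 k = if k = 1 then (n:ℂ) else 0 := rfl

lemma psiC_succ (m i k : ℕ) : psiC P n m (i+1) k =
    if m = n then 0 else
      ((m:ℂ) - n)⁻¹ *
        ((∑ i' ∈ Finset.Icc 1 i, ∑ k' ∈ Finset.range (k+2),
           EC P n i' k' * psiC P n m (i+1-i') (k+1-k')) -
         cf3 m i k (substOps P (sliceS P n i))) := by
  show (hist P n (i+1)).1 m (i+1) k = _
  rw [hist]
  simp only [if_pos rfl]
  have hsum : (∑ i' ∈ Finset.Icc 1 i, ∑ k' ∈ Finset.range (k+2),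
      (hist P n i).2 i' k' * (hist P n i).1 m (i+1-i') (k+1-k'))
      = (∑ i' ∈ Finset.Icc 1 i, ∑ k' ∈ Finset.range (k+2),
      EC P n i' k' * psiC P n m (i+1-i') (k+1-k')) := by
    apply Finset.sum_congr rfl
    intro i' hi'
    apply Finset.sum_congr rfl
    intro k' _
    rw [Finset.mem_Icc] at hi'
    rw [hist_snd_stable P n i i' hi'.2, hist_fst_stable P n i (i+1-i') (by omega)]
  rw [hsum]
  rfl

lemma EC_succ (i k : ℕ) : EC P n (i+1) k =
    if k = 0 then 0 else cf3 n i (k-1) (substOps P (sliceS P n i)) := by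
  show (hist P n (i+1)).2 (i+1) k = _
  rw [hist]
  simp only [if_pos rfl]
  rfl

lemma cf3_ofCoeff (g : (Fin 3 →₀ ℕ) → ℂ) (m i k : ℕ) : cf3 m i k (ofCoeff g) = g (e3 m i k) :=
  rfl

lemma cf3_PsiS (m i k : ℕ) : cf3 m i k (PsiS P n) = psiC P n m i k := rfl

lemma lvl_slice (i : ℕ) : Lvl i (sliceS P n i) (PsiS P n) := by
  intro m k
  show (if (e3 m i k) 1 = i then psiC P n ((e3 m i k) 0) i ((e3 m i k) 2) else 0) = _
  rw [e3_apply0, e3_apply1, e3_apply2, if_pos rfl]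
  rfl

lemma EC_k0 (i : ℕ) : EC P n i 0 = 0 := by
  cases i with
  | zero => rw [EC_zero]; norm_num
  | succ i => rw [EC_succ]; norm_num

lemma psiC_at_n (i k : ℕ) : psiC P n n i k = if i = 0 ∧ k = 0 then 1 else 0 := by
  cases i with
  | zero => rw [psiC_zero]; by_cases hk : k = 0 <;> simp [hk]
  | succ i => rw [psiC_succ]; simp

end Construction
end RS

namespace RS
open MvPowerSeries Finset

section Construction
variable (P : FreeAlgebra ℂ (Fin 2)) (n : ℕ)

lemma cf3_ES (i k : ℕ) : cf3 0 i k (ES P n) = EC P n i k := by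
  show (if (e3 0 i k) 0 = 0 then EC P n ((e3 0 i k) 1) ((e3 0 i k) 2) else 0) = _
  rw [e3_apply0, e3_apply1, e3_apply2, if_pos rfl]

lemma ES_dep : ∀ d : Fin 3 →₀ ℕ, d 0 ≠ 0 → MvPowerSeries.coeff (R := ℂ) d (ES P n) = 0 := by
  intro d hd
  show (if d 0 = 0 then EC P n (d 1) (d 2) else 0) = 0
  rw [if_neg hd]

lemma slice_subst (i m k : ℕ) :
    cf3 m i k (substOps P (sliceS P n i)) = cf3 m i k (substOps P (PsiS P n)) :=
  (tame_substOps P).1 i _ _ (lvl_slice P n i) m k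

lemma psiC_succ' (m i k : ℕ) : psiC P n m (i+1) k =
    if m = n then 0 else
      ((m:ℂ) - n)⁻¹ *
        ((∑ i' ∈ Finset.Icc 1 i, ∑ k' ∈ Finset.range (k+2),
           EC P n i' k' * psiC P n m (i+1-i') (k+1-k')) -
         cf3 m i k (substOps P (PsiS P n))) := by
  rw [psiC_succ, slice_subst]

lemma EC_succ' (i k : ℕ) : EC P n (i+1) k =
    if k = 0 then 0 else cf3 n i (k-1) (substOps P (PsiS P n)) := by
  rw [EC_succ]
  by_cases hk : k = 0
  · rw [if_pos hk, if_pos hk]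
  · rw [if_neg hk, if_neg hk, slice_subst]

lemma sum_Icc_one (j : ℕ) (f : ℕ → ℂ) :
    ∑ i' ∈ Finset.Icc 1 j, f i' = ∑ x ∈ Finset.range j, f (x+1) := by
  rw [← Finset.Ico_add_one_right_eq_Icc, Finset.sum_Ico_eq_sum_range]
  exact Finset.sum_congr rfl fun x _ => by rw [Nat.add_comm]

lemma inner_zero_eval (k : ℕ) (g : ℕ → ℂ) :
    ∑ k' ∈ Finset.range (k+1), EC P n 0 k' * g k' = if 1 ≤ k then (n:ℂ) * g 1 else 0 := by
  have h1 : ∀ k' ∈ Finset.range (k+1), EC P n 0 k' * g k'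
      = if k' = 1 then (n:ℂ) * g k' else 0 := by
    intro k' _
    rw [EC_zero, ite_mul, zero_mul]
  rw [Finset.sum_congr rfl h1, Finset.sum_ite_eq' (Finset.range (k+1)) 1 (fun k' => (n:ℂ) * g k')]
  by_cases hk : 1 ≤ k
  · rw [if_pos (Finset.mem_range.mpr (by omega)), if_pos hk]
  · rw [if_neg (fun hc => hk (by have := Finset.mem_range.mp hc; omega)), if_neg hk]

lemma inner_top_eval (j k m : ℕ) :
    ∑ k' ∈ Finset.range (k+1), EC P n (j+1) k' * psiC P n m 0 (k-k')
      = if m = n then EC P n (j+1) k else 0 := by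
  by_cases hm : m = n
  · have h1 : ∀ k' ∈ Finset.range (k+1), EC P n (j+1) k' * psiC P n m 0 (k-k')
        = if k' = k then EC P n (j+1) k' else 0 := by
      intro k' hk'
      rw [Finset.mem_range] at hk'
      rw [psiC_zero]
      by_cases hkk : k' = k
      · rw [if_pos ⟨hm, by omega⟩, mul_one, if_pos hkk]
      · rw [if_neg (fun hc => hkk (by have h2 := hc.2; omega)), mul_zero, if_neg hkk]
    rw [Finset.sum_congr rfl h1,
      Finset.sum_ite_eq' (Finset.range (k+1)) k (fun k' => EC P n (j+1) k'),
      if_pos (Finset.mem_range.mpr (by omega)), if_pos hm]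
  · rw [if_neg hm]
    apply Finset.sum_eq_zero
    intro k' _
    rw [psiC_zero, if_neg (fun hc => hm hc.1), mul_zero]

theorem eqc_all (m i k : ℕ) : eqc P (ES P n) (PsiS P n) m i k := by
  unfold eqc
  simp only [cf3_ES, cf3_PsiS]
  cases i with
  | zero =>
      simp only [zero_add, Finset.sum_range_one, Nat.sub_zero, Nat.sub_self]
      rw [inner_zero_eval P n k (fun k' => psiC P n m 0 (k-k'))]
      have hfalse : ¬ (1 ≤ 0 ∧ 1 ≤ k) := by omega
      rw [if_neg hfalse, add_zero]
      by_cases hk : 1 ≤ k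
      · rw [if_pos hk, if_pos hk]
        show (m:ℂ) * psiC P n m 0 (k-1) = (n:ℂ) * psiC P n m 0 (k-1)
        by_cases hm : m = n
        · rw [hm]
        · rw [psiC_zero, if_neg (fun hc => hm hc.1), mul_zero, mul_zero]
      · rw [if_neg hk, if_neg hk]
  | succ j =>
      rw [Finset.sum_range_succ, Finset.sum_range_succ']
      simp only [Nat.sub_self, Nat.sub_zero, Nat.add_sub_cancel]
      rw [inner_top_eval]
      rw [inner_zero_eval P n k (fun k' => psiC P n m (j+1) (k-k'))]
      by_cases hk : 1 ≤ k
      · rw [if_pos hk, if_pos (⟨by omega, hk⟩ : 1 ≤ j + 1 ∧ 1 ≤ k), if_pos hk]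
        by_cases hm : m = n
        · rw [if_pos hm]
          have hψ0 : psiC P n m (j+1) (k-1) = 0 := by
            rw [hm, psiC_at_n, if_neg (by omega : ¬ (j+1 = 0 ∧ k-1 = 0))]
          have hS0 : (∑ x ∈ Finset.range j, ∑ k' ∈ Finset.range (k+1),
              EC P n (x+1) k' * psiC P n m (j+1-(x+1)) (k-k')) = 0 := by
            apply Finset.sum_eq_zero
            intro x hx
            rw [Finset.mem_range] at hx
            apply Finset.sum_eq_zero
            intro k' _
            rw [hm, psiC_at_n, if_neg (by omega : ¬ (j+1-(x+1) = 0 ∧ k-k' = 0)), mul_zero]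
          have hEC : EC P n (j+1) k = cf3 m j (k-1) (substOps P (PsiS P n)) := by
            rw [EC_succ', if_neg (by omega : ¬ k = 0), hm]
          rw [hψ0, hS0, hEC]
          ring
        · rw [if_neg hm, add_zero]
          have hψ := psiC_succ' P n m j (k-1)
          rw [if_neg hm, show k-1+2 = k+1 by omega] at hψ
          have hexp : (∑ i' ∈ Finset.Icc 1 j, ∑ k' ∈ Finset.range (k+1),
              EC P n i' k' * psiC P n m (j+1-i') (k-1+1-k'))
              = ∑ i' ∈ Finset.Icc 1 j, ∑ k' ∈ Finset.range (k+1),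
              EC P n i' k' * psiC P n m (j+1-i') (k-k') :=
            Finset.sum_congr rfl fun i' _ => Finset.sum_congr rfl fun k' _ => by
              rw [show k-1+1-k' = k-k' by omega]
          rw [hexp, sum_Icc_one j (fun i' => ∑ k' ∈ Finset.range (k+1),
            EC P n i' k' * psiC P n m (j+1-i') (k-k'))] at hψ
          have hne : ((m:ℂ) - n) ≠ 0 := by
            apply sub_ne_zero.mpr
            exact_mod_cast hm
          have h2 : ((m:ℂ) - n) * psiC P n m (j+1) (k-1)
              = (∑ x ∈ Finset.range j, ∑ k' ∈ Finset.range (k+1),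
                  EC P n (x+1) k' * psiC P n m (j+1-(x+1)) (k-k'))
                - cf3 m j (k-1) (substOps P (PsiS P n)) := by
            rw [hψ, ← mul_assoc, mul_inv_cancel₀ hne, one_mul]
          linear_combination h2
      · have hk0 : k = 0 := by omega
        subst hk0
        rw [if_neg hk, if_neg (fun hc => hk hc.2), if_neg hk]
        have hS0 : (∑ x ∈ Finset.range j, ∑ k' ∈ Finset.range (0+1),
            EC P n (x+1) k' * psiC P n m (j+1-(x+1)) (0-k')) = 0 := by
          apply Finset.sum_eq_zero
          intro x _
          rw [Finset.sum_range_one, EC_k0, zero_mul]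
        rw [hS0, zero_add, zero_add]
        by_cases hm : m = n
        · rw [if_pos hm, EC_k0]
        · rw [if_neg hm]
end Construction
end RS

namespace RS
open MvPowerSeries Finset

section Construction
variable (P : FreeAlgebra ℂ (Fin 2)) (n : ℕ)

lemma sum_pick (F G : ℕ → ℂ) (k : ℕ) (hG : ∀ c, G c = if c = 0 then 1 else 0) :
    ∑ k' ∈ Finset.range (k+1), F k' * G (k-k') = F k := by
  have h1 : ∀ k' ∈ Finset.range (k+1), F k' * G (k-k') = if k' = k then F k' else 0 := by
    intro k' hk'
    rw [Finset.mem_range] at hk'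
    rw [hG]
    by_cases hkk : k' = k
    · rw [if_pos (by omega), mul_one, if_pos hkk]
    · rw [if_neg (by omega), mul_zero, if_neg hkk]
  rw [Finset.sum_congr rfl h1, Finset.sum_ite_eq' (Finset.range (k+1)) k F,
    if_pos (Finset.mem_range.mpr (by omega))]

theorem RSCond_construct : RSCond P n (ES P n, PsiS P n) := by
  refine ⟨?_, ?_, ?_, ?_⟩
  · intro d ⟨i0, hi0, hdi⟩
    have h0 : i0 = 0 := by
      fin_cases i0
      · rfl
      · exact absurd (by simp : (1 : Fin 3) ∈ ({1,2} : Set (Fin 3))) hi0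
      · exact absurd (by simp : (2 : Fin 3) ∈ ({1,2} : Set (Fin 3))) hi0
    exact ES_dep P n d (h0 ▸ hdi)
  · exact (osc_iff P (ES P n) (PsiS P n) (ES_dep P n)).mpr (fun m i k => eqc_all P n m i k)
  · intro d hd1
    show psiC P n (d 0) (d 1) (d 2) = _
    rw [hd1, psiC_zero]
    by_cases h : d 0 = n ∧ d 2 = 0
    · rw [if_pos h, if_pos]
      rw [← e3_eta d, hd1, h.1, h.2, ← single0]
    · rw [if_neg h, if_neg]
      intro hc
      apply h
      rw [← e3_eta d, hd1, single0] at hc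
      have := e3_inj hc
      exact ⟨this.1, this.2.2⟩
  · intro d hd0
    show psiC P n (d 0) (d 1) (d 2) = _
    rw [hd0, psiC_at_n]
    by_cases h : d 1 = 0 ∧ d 2 = 0
    · rw [if_pos h, if_pos]
      rw [← e3_eta d, hd0, h.1, h.2, ← single0]
    · rw [if_neg h, if_neg]
      intro hc
      apply h
      rw [← e3_eta d, single0] at hc
      have := e3_inj hc
      exact ⟨this.2.1, this.2.2⟩

theorem RS_unique (p : MS × MS) (hp : RSCond P n p) : p = (ES P n, PsiS P n) := by
  obtain ⟨hdep, heq, h3, h4⟩ := hp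
  have hdep' : ∀ d : Fin 3 →₀ ℕ, d 0 ≠ 0 → MvPowerSeries.coeff (R := ℂ) d p.1 = 0 := by
    intro d hd
    exact hdep d ⟨0, by simp, hd⟩
  have heqc := (osc_iff P p.1 p.2 hdep').mp heq
  have hψ0 : ∀ m k, cf3 m 0 k p.2 = if m = n ∧ k = 0 then 1 else 0 := by
    intro m k
    have := h3 (e3 m 0 k) (e3_apply1 m 0 k)
    rw [show MvPowerSeries.coeff (R := ℂ) (e3 m 0 k) p.2 = cf3 m 0 k p.2 from rfl] at this
    rw [this, single0]
    by_cases h : m = n ∧ k = 0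
    · rw [if_pos (by rw [h.1, h.2]), if_pos h]
    · rw [if_neg, if_neg h]
      intro hc
      have := e3_inj hc
      exact h ⟨this.1, this.2.2⟩
  have hψn : ∀ i k, cf3 n i k p.2 = if i = 0 ∧ k = 0 then 1 else 0 := by
    intro i k
    have := h4 (e3 n i k) (e3_apply0 n i k)
    rw [show MvPowerSeries.coeff (R := ℂ) (e3 n i k) p.2 = cf3 n i k p.2 from rfl] at this
    rw [this, single0]
    by_cases h : i = 0 ∧ k = 0
    · rw [if_pos (by rw [h.1, h.2]), if_pos h]
    · rw [if_neg, if_neg h]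
      intro hc
      have := e3_inj hc
      exact h ⟨this.2.1, this.2.2⟩
  -- main induction
  have main : ∀ i, (∀ k, cf3 0 i k p.1 = EC P n i k) ∧
      (∀ m k, cf3 m i k p.2 = psiC P n m i k) := by
    intro i
    induction i using Nat.strong_induction_on with
    | _ i ih =>
      match i with
      | 0 =>
          constructor
          · intro k
            have hq := heqc n 0 k
            unfold eqc at hq
            simp only [zero_add, Finset.sum_range_one, Nat.sub_zero, Nat.sub_self] at hq
            rw [sum_pick (fun k' => cf3 0 0 k' p.1) (fun c => cf3 n 0 c p.2) k
              (fun c => by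
                show cf3 n 0 c p.2 = if c = 0 then 1 else 0
                rw [hψ0]; by_cases hc : c = 0 <;> simp [hc])] at hq
            rw [if_neg (by omega : ¬(1 ≤ 0 ∧ 1 ≤ k)), add_zero] at hq
            rw [← hq, EC_zero]
            by_cases hk : 1 ≤ k
            · rw [if_pos hk, hψ0]
              by_cases hk1 : k = 1
              · rw [if_pos (⟨rfl, by omega⟩ : n = n ∧ k - 1 = 0), mul_one, if_pos hk1]
              · rw [if_neg (fun hc => absurd hc.2 (by omega)), mul_zero, if_neg hk1]
            · rw [if_neg hk, if_neg (by omega : ¬ k = 1)]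
          · intro m k
            rw [hψ0, psiC_zero]
      | (j+1) =>
          have hlvl : ∀ j' ≤ j, ∀ m k,
              cf3 m j' k (substOps P p.2) = cf3 m j' k (substOps P (PsiS P n)) := by
            intro j' hj'
            exact (tame_substOps P).1 j' p.2 (PsiS P n)
              (fun m k => by rw [(ih j' (by omega)).2 m k, cf3_PsiS])
          constructor
          · intro k
            have hq := heqc n (j+1) k
            unfold eqc at hq
            -- evaluate the RHS sum
            rw [Finset.sum_range_succ] at hq
            have h0 : (∑ i' ∈ Finset.range (j+1), ∑ k' ∈ Finset.range (k+1),
                cf3 0 i' k' p.1 * cf3 n (j+1-i') (k-k') p.2) = 0 := by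
              apply Finset.sum_eq_zero
              intro i' hi'
              rw [Finset.mem_range] at hi'
              apply Finset.sum_eq_zero
              intro k' _
              rw [hψn, if_neg (by omega : ¬ (j+1-i' = 0 ∧ k-k' = 0)), mul_zero]
            rw [h0, zero_add, Nat.sub_self] at hq
            rw [sum_pick (fun k' => cf3 0 (j+1) k' p.1) (fun c => cf3 n 0 c p.2) k
              (fun c => by
                show cf3 n 0 c p.2 = if c = 0 then 1 else 0
                rw [hψ0]; by_cases hc : c = 0 <;> simp [hc])] at hq
            rw [← hq]
            have hz : cf3 n (j+1) (k-1) p.2 = 0 := by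
              rw [hψn, if_neg (by omega : ¬ (j+1 = 0 ∧ k-1 = 0))]
            by_cases hk : 1 ≤ k
            · rw [if_pos hk, if_pos (⟨by omega, hk⟩ : 1 ≤ j+1 ∧ 1 ≤ k), hz, mul_zero, zero_add]
              rw [show j+1-1 = j from rfl, hlvl j (le_refl j)]
              rw [EC_succ', if_neg (by omega : ¬ k = 0)]
            · rw [if_neg hk, if_neg (fun hc => hk hc.2), add_zero,
                show k = 0 by omega, EC_k0]
          · intro m k
            by_cases hm : m = n
            · rw [hm, hψn, psiC_at_n]
            · have hq := heqc m (j+1) (k+1)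
              unfold eqc at hq
              rw [Finset.sum_range_succ, Finset.sum_range_succ'] at hq
              simp only [Nat.sub_self, Nat.sub_zero, Nat.add_sub_cancel] at hq
              -- top term vanishes
              have htop : (∑ k' ∈ Finset.range (k+1+1),
                  cf3 0 (j+1) k' p.1 * cf3 m 0 (k+1-k') p.2) = 0 := by
                apply Finset.sum_eq_zero
                intro k' _
                rw [hψ0, if_neg (fun hc => hm hc.1), mul_zero]
              rw [htop, add_zero] at hq
              -- zero term
              have hzero : (∑ k' ∈ Finset.range (k+1+1),
                  cf3 0 0 k' p.1 * cf3 m (j+1) (k+1-k') p.2)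
                  = (n:ℂ) * cf3 m (j+1) k p.2 := by
                have hE0 : ∀ k', cf3 0 0 k' p.1 = if k' = 1 then (n:ℂ) else 0 := by
                  intro k'
                  rw [(ih 0 (by omega)).1 k', EC_zero]
                have h1 : ∀ k' ∈ Finset.range (k+1+1),
                    cf3 0 0 k' p.1 * cf3 m (j+1) (k+1-k') p.2
                    = if k' = 1 then (n:ℂ) * cf3 m (j+1) (k+1-k') p.2 else 0 := by
                  intro k' _
                  rw [hE0, ite_mul, zero_mul]
                rw [Finset.sum_congr rfl h1,
                  Finset.sum_ite_eq' (Finset.range (k+1+1)) 1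
                    (fun k' => (n:ℂ) * cf3 m (j+1) (k+1-k') p.2),
                  if_pos (Finset.mem_range.mpr (by omega))]
                norm_num
              rw [hzero] at hq
              -- middle terms rewrite to constructed values
              have hmid : (∑ x ∈ Finset.range j, ∑ k' ∈ Finset.range (k+1+1),
                  cf3 0 (x+1) k' p.1 * cf3 m (j+1-(x+1)) (k+1-k') p.2)
                  = ∑ x ∈ Finset.range j, ∑ k' ∈ Finset.range (k+1+1),
                    EC P n (x+1) k' * psiC P n m (j+1-(x+1)) (k+1-k') := by
                apply Finset.sum_congr rfl
                intro x hx
                rw [Finset.mem_range] at hx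
                apply Finset.sum_congr rfl
                intro k' _
                rw [(ih (x+1) (by omega)).1 k', (ih (j+1-(x+1)) (by omega)).2 m (k+1-k')]
              rw [hmid] at hq
              rw [if_pos (by omega : 1 ≤ k+1),
                if_pos (⟨by omega, by omega⟩ : 1 ≤ j+1 ∧ 1 ≤ k+1)] at hq
              rw [hlvl j (le_refl j)] at hq
              -- now invert the construction formula
              have hψc := psiC_succ' P n m j k
              rw [if_neg hm, show k + 2 = k + 1 + 1 by omega] at hψc
              have hexp : (∑ i' ∈ Finset.Icc 1 j, ∑ k' ∈ Finset.range (k+2),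
                  EC P n i' k' * psiC P n m (j+1-i') (k+1-k'))
                  = ∑ x ∈ Finset.range j, ∑ k' ∈ Finset.range (k+1+1),
                    EC P n (x+1) k' * psiC P n m (j+1-(x+1)) (k+1-k') := by
                rw [sum_Icc_one j (fun i' => ∑ k' ∈ Finset.range (k+2),
                  EC P n i' k' * psiC P n m (j+1-i') (k+1-k'))]
              rw [hexp] at hψc
              have hne : ((m:ℂ) - n) ≠ 0 := by
                apply sub_ne_zero.mpr
                exact_mod_cast hm
              apply mul_left_cancel₀ hne
              rw [hψc, ← mul_assoc, mul_inv_cancel₀ hne, one_mul]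
              linear_combination hq
  -- conclude
  have hp1 : p.1 = ES P n := by
    apply MvPowerSeries.ext
    intro d
    by_cases hd : d 0 = 0
    · have : MvPowerSeries.coeff (R := ℂ) d p.1 = cf3 (d 0) (d 1) (d 2) p.1 := by
        unfold cf3; rw [e3_eta]
      rw [this, hd, (main (d 1)).1 (d 2)]
      show _ = (if d 0 = 0 then EC P n (d 1) (d 2) else 0)
      rw [if_pos hd]
    · rw [hdep' d hd]
      show (0:ℂ) = (if d 0 = 0 then EC P n (d 1) (d 2) else 0)
      rw [if_neg hd]
  have hp2 : p.2 = PsiS P n := by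
    apply MvPowerSeries.ext
    intro d
    have : MvPowerSeries.coeff (R := ℂ) d p.2 = cf3 (d 0) (d 1) (d 2) p.2 := by
      unfold cf3; rw [e3_eta]
    rw [this, (main (d 1)).2 (d 0) (d 2)]
    rfl
  exact Prod.ext hp1 hp2

end Construction
end RS

namespace RS
open MvPowerSeries Finset

noncomputable def wt (j : ℕ) : ℝ := 1 / ((j:ℝ)+1)^2

lemma wt_pos (j : ℕ) : 0 < wt j := by unfold wt; positivity

lemma wt_le_one (j : ℕ) : wt j ≤ 1 := by
  unfold wt
  rw [div_le_one (by positivity)]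
  nlinarith [Nat.cast_nonneg (α := ℝ) j]

lemma wt_zero : wt 0 = 1 := by unfold wt; norm_num

lemma wt_anti {j j' : ℕ} (h : j ≤ j') : wt j' ≤ wt j := by
  unfold wt
  apply div_le_div_of_nonneg_left (by norm_num) (by positivity)
  have : (j:ℝ) ≤ j' := by exact_mod_cast h
  nlinarith [Nat.cast_nonneg (α := ℝ) j]

lemma wt_le_four (j : ℕ) : wt j ≤ 4 * wt (j+1) := by
  unfold wt
  push_cast
  rw [mul_one_div, div_le_div_iff₀ (by positivity) (by positivity)]
  nlinarith [Nat.cast_nonneg (α := ℝ) j]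

lemma wt_sub (r k : ℕ) : wt (k-r) ≤ ((r:ℝ)+1)^2 * wt k := by
  unfold wt
  rw [show ((r:ℝ)+1)^2 * (1 / ((k:ℝ)+1)^2) = ((r:ℝ)+1)^2 / ((k:ℝ)+1)^2 by ring]
  rw [div_le_div_iff₀ (by positivity) (by positivity)]
  have hkey : ((k:ℝ)+1) ≤ ((r:ℝ)+1) * (((k-r:ℕ):ℝ)+1) := by
    rcases le_or_gt r k with h | h
    · have hc : ((k-r:ℕ):ℝ) = (k:ℝ) - r := by
        rw [Nat.cast_sub h]
      rw [hc]
      have h1 : (r:ℝ) ≤ k := by exact_mod_cast h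
      nlinarith [Nat.cast_nonneg (α := ℝ) r, Nat.cast_nonneg (α := ℝ) k]
    · have hc : k - r = 0 := by omega
      rw [hc]
      have h1 : (k:ℝ) ≤ r := by
        have := le_of_lt h
        exact_mod_cast this
      push_cast
      nlinarith
  nlinarith [mul_le_mul hkey hkey (by positivity : (0:ℝ) ≤ (k:ℝ)+1)
    (by positivity : (0:ℝ) ≤ ((r:ℝ)+1) * (((k-r:ℕ):ℝ)+1))]

lemma basel : ∀ N : ℕ, ∑ j ∈ Finset.range N, wt j ≤ 2 := by
  have key : ∀ N : ℕ, ∑ j ∈ Finset.range (N+1), wt j ≤ 2 - 1/((N:ℝ)+1) := by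
    intro N
    induction N with
    | zero => rw [Finset.sum_range_one, wt_zero]; norm_num
    | succ N ih =>
        rw [Finset.sum_range_succ]
        have h1 : wt (N+1) ≤ 1/((N:ℝ)+1) - 1/((N:ℝ)+2) := by
          unfold wt
          rw [div_sub_div _ _ (by positivity) (by positivity)]
          rw [div_le_div_iff₀ (by positivity) (by positivity)]
          push_cast
          nlinarith [Nat.cast_nonneg (α := ℝ) N]
        push_cast at ih ⊢
        rw [show ((N:ℝ)+1+1) = (N:ℝ)+2 by ring]
        linarith
  intro N
  cases N with
  | zero => simp
  | succ N =>
      calc ∑ j ∈ Finset.range (N+1), wt j ≤ 2 - 1/((N:ℝ)+1) := key N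
        _ ≤ 2 := by
            have : (0:ℝ) < 1/((N:ℝ)+1) := by positivity
            linarith

lemma conv8 (K : ℕ) : ∑ j ∈ Finset.range (K+1), wt j * wt (K-j) ≤ 8 * wt K := by
  have hterm : ∀ j ∈ Finset.range (K+1),
      wt j * wt (K-j) ≤ 2/(((K:ℝ)+2)^2) * (wt j + wt (K-j)) := by
    intro j hj
    rw [Finset.mem_range] at hj
    set a : ℝ := (j:ℝ)+1 with ha
    set b : ℝ := ((K-j:ℕ):ℝ)+1 with hb
    have hab : a + b = (K:ℝ)+2 := by
      rw [ha, hb, Nat.cast_sub (by omega : j ≤ K)]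
      ring
    have hA : 0 < a := by rw [ha]; positivity
    have hB : 0 < b := by rw [hb]; positivity
    show 1/a^2 * (1/b^2) ≤ 2/(((K:ℝ)+2)^2) * (1/a^2 + 1/b^2)
    rw [← hab]
    rw [div_mul_div_comm, one_mul]
    have hr : 1/a^2 + 1/b^2 = (b^2+a^2)/(a^2*b^2) := by
      field_simp
    rw [hr, div_mul_div_comm]
    rw [div_le_div_iff₀ (by positivity) (by positivity)]
    nlinarith [mul_nonneg (sq_nonneg (a-b)) (sq_nonneg (a*b)), sq_nonneg (a*b)]
  calc ∑ j ∈ Finset.range (K+1), wt j * wt (K-j)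
      ≤ ∑ j ∈ Finset.range (K+1), 2/(((K:ℝ)+2)^2) * (wt j + wt (K-j)) :=
        Finset.sum_le_sum hterm
    _ = 2/(((K:ℝ)+2)^2) * ((∑ j ∈ Finset.range (K+1), wt j)
          + ∑ j ∈ Finset.range (K+1), wt (K-j)) := by
        rw [← Finset.sum_add_distrib, Finset.mul_sum]
    _ ≤ 2/(((K:ℝ)+2)^2) * (2 + 2) := by
        apply mul_le_mul_of_nonneg_left _ (by positivity)
        apply add_le_add (basel (K+1))
        rw [← Finset.sum_range_reflect]
        calc ∑ j ∈ Finset.range (K+1), wt (K - (K - j)) = ∑ j ∈ Finset.range (K+1), wt j := by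
              apply Finset.sum_congr rfl
              intro j hj
              rw [Finset.mem_range] at hj
              congr 1
              omega
          _ ≤ 2 := basel (K+1)
    _ ≤ 8 * wt K := by
        unfold wt
        rw [show (8:ℝ) * (1/((K:ℝ)+1)^2) = 8 / ((K:ℝ)+1)^2 by ring]
        rw [div_mul_eq_mul_div, div_le_div_iff₀ (by positivity) (by positivity)]
        nlinarith [Nat.cast_nonneg (α := ℝ) K]

section SupportVar
variable (P : FreeAlgebra ℂ (Fin 2)) (n : ℕ) (L : ℕ) (C : ℝ)

lemma cf3_sliceS (i m k : ℕ) : cf3 m i k (sliceS P n i) = psiC P n m i k := lvl_slice P n i m k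

lemma support_bound (h3 : P3 (substOps P) L C) :
    ∀ i m k, n + i * L < m → psiC P n m i k = 0 := by
  intro i
  induction i using Nat.strong_induction_on with
  | _ i ih =>
    match i with
    | 0 =>
        intro m k hm
        rw [Nat.zero_mul] at hm
        rw [psiC_zero, if_neg (fun hc => by omega)]
    | (i+1) =>
        intro m k hm
        have hmul : (i+1)*L = i*L + L := by ring
        have hTc : ∀ k', cf3 m i k' (substOps P (sliceS P n i)) = 0 := by
          intro k'
          have hb := h3 (sliceS P n i) m i k'
          have hg : gsum L (sliceS P n i) m i k' = 0 := by
            apply Finset.sum_eq_zero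
            intro r _
            apply Finset.sum_eq_zero
            intro s hs
            rw [Finset.mem_range] at hs
            by_cases hgu : L ≤ m + s ∧ r ≤ k'
            · rw [if_pos hgu, cf3_sliceS,
                ih i (by omega) (m+s-L) (k'-r) (by omega), norm_zero, mul_zero]
            · rw [if_neg hgu]
          rw [hg, mul_zero] at hb
          exact norm_le_zero_iff.mp hb
        rw [psiC_succ, if_neg (fun hc => by omega : ¬ m = n)]
        rw [hTc k]
        have hS : (∑ i' ∈ Finset.Icc 1 i, ∑ k' ∈ Finset.range (k+2),
            EC P n i' k' * psiC P n m (i+1-i') (k+1-k')) = 0 := by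
          apply Finset.sum_eq_zero
          intro i' hi'
          rw [Finset.mem_Icc] at hi'
          apply Finset.sum_eq_zero
          intro k' _
          have hlt : n + (i+1-i') * L < m := by
            have h2 : (i+1-i') * L ≤ (i+1) * L := Nat.mul_le_mul_right L (by omega)
            omega
          rw [ih (i+1-i') (by omega) m (k+1-k') hlt, mul_zero]
        rw [hS]
        ring
end SupportVar
end RS

namespace RS
open MvPowerSeries Finset

noncomputable def cB (n L : ℕ) : ℝ := (n:ℝ) + L
noncomputable def K1 (L : ℕ) (C : ℝ) : ℝ := C * ((L:ℝ)+1) * (2*(L:ℝ)+1) * ((L:ℝ)+1)^2 * 4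
noncomputable def AB (L : ℕ) (C : ℝ) : ℝ := 512 * K1 L C + 1
noncomputable def epsB (n L : ℕ) : ℝ := 1 / (128 * cB n L)

section MainBound
variable (P : FreeAlgebra ℂ (Fin 2)) (n L : ℕ) (C : ℝ)

lemma cB_one (hL : 1 ≤ L) : 1 ≤ cB n L := by
  unfold cB
  have : (1:ℝ) ≤ L := by exact_mod_cast hL
  have : (0:ℝ) ≤ n := Nat.cast_nonneg n
  linarith

lemma K1_nonneg (hC0 : 0 ≤ C) : 0 ≤ K1 L C := by unfold K1; positivity

lemma AB_one (hC0 : 0 ≤ C) : 1 ≤ AB L C := by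
  unfold AB
  nlinarith [K1_nonneg L C hC0]

lemma epsB_pos (hL : 1 ≤ L) : 0 < epsB n L := by
  unfold epsB
  have := cB_one n L hL
  positivity

lemma bnd_nonneg {A c x : ℝ} (hA : 0 ≤ A) (hc : 0 ≤ c) (hx : 0 ≤ x) (i k a b : ℕ) :
    0 ≤ A^i * c^k * x^k * wt a * wt b :=
  mul_nonneg (mul_nonneg (mul_nonneg (mul_nonneg (pow_nonneg hA i) (pow_nonneg hc k))
    (pow_nonneg hx k)) (wt_pos a).le) (wt_pos b).le

lemma Tbound (hL : 1 ≤ L) (hC0 : 0 ≤ C) (h3 : P3 (substOps P) L C) (i k m : ℕ)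
    (hIH : ∀ m' k', ‖psiC P n m' i k'‖
      ≤ AB L C ^ i * cB n L ^ k' * ((i:ℝ)+1)^k' * wt i * wt k')
    (hm : m ≤ n + (i+1)*L) :
    ‖cf3 m i k (substOps P (sliceS P n i))‖
      ≤ K1 L C * (AB L C ^ i * cB n L ^ k * ((i:ℝ)+2)^k * wt (i+1) * wt k) := by
  set A := AB L C with hA
  set c := cB n L with hc
  have hA0 : (0:ℝ) ≤ A := le_trans zero_le_one (AB_one L C hC0)
  have hc0 : (0:ℝ) ≤ c := le_trans zero_le_one (cB_one n L hL)
  set B : ℝ := ((L:ℝ)+1)^2 * 4 * (A^i * c^k * ((i:ℝ)+2)^k * wt (i+1) * wt k) with hB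
  have hB0 : 0 ≤ B := by
    rw [hB]
    have := bnd_nonneg (x := (i:ℝ)+2) hA0 hc0 (by positivity) i k (i+1) k
    positivity
  have hterm : ∀ r ∈ Finset.range (L+1), ∀ s ∈ Finset.range (2*L+1),
      (if L ≤ m + s ∧ r ≤ k then ((m:ℝ)+L)^r * ‖cf3 (m+s-L) i (k-r) (sliceS P n i)‖ else 0)
        ≤ B := by
    intro r hr s hs
    rw [Finset.mem_range] at hr hs
    by_cases hgu : L ≤ m + s ∧ r ≤ k
    · rw [if_pos hgu, cf3_sliceS]
      have key2 : ((m:ℝ)+L)^r ≤ c^r * ((i:ℝ)+2)^r := by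
        rw [← mul_pow]
        apply pow_le_pow_left₀ (by positivity)
        have h1 : (m:ℝ) ≤ (n:ℝ) + ((i:ℝ)+1) * L := by
          have : (m:ℝ) ≤ ((n + (i+1)*L : ℕ) : ℝ) := by exact_mod_cast hm
          push_cast at this
          linarith
        have h2 : (0:ℝ) ≤ n := Nat.cast_nonneg n
        have h3' : (0:ℝ) ≤ L := Nat.cast_nonneg L
        have h4 : (0:ℝ) ≤ i := Nat.cast_nonneg i
        rw [hc]
        unfold cB
        nlinarith
      calc ((m:ℝ)+L)^r * ‖psiC P n (m+s-L) i (k-r)‖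
          ≤ (c^r * ((i:ℝ)+2)^r) * (A^i * c^(k-r) * ((i:ℝ)+1)^(k-r) * wt i * wt (k-r)) := by
            apply mul_le_mul key2 (hIH (m+s-L) (k-r)) (norm_nonneg _) (by positivity)
        _ = A^i * (c^r * c^(k-r)) * (((i:ℝ)+2)^r * ((i:ℝ)+1)^(k-r)) * wt i * wt (k-r) := by
            ring
        _ ≤ A^i * c^k * (((i:ℝ)+2)^r * ((i:ℝ)+1)^(k-r)) * wt i * wt (k-r) := by
            rw [← pow_add, show r + (k-r) = k by omega]
        _ ≤ A^i * c^k * ((i:ℝ)+2)^k * (4 * wt (i+1)) * (((L:ℝ)+1)^2 * wt k) := by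
            have e2 : ((i:ℝ)+2)^r * ((i:ℝ)+1)^(k-r) ≤ ((i:ℝ)+2)^k := by
              calc ((i:ℝ)+2)^r * ((i:ℝ)+1)^(k-r) ≤ ((i:ℝ)+2)^r * ((i:ℝ)+2)^(k-r) := by
                    apply mul_le_mul_of_nonneg_left _ (by positivity)
                    apply pow_le_pow_left₀ (by positivity) (by linarith)
                _ = ((i:ℝ)+2)^(r + (k-r)) := (pow_add _ _ _).symm
                _ = ((i:ℝ)+2)^k := by rw [show r + (k-r) = k by omega]
            have e3 : wt (k-r) ≤ ((L:ℝ)+1)^2 * wt k := by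
              refine le_trans (wt_sub r k) ?_
              apply mul_le_mul_of_nonneg_right _ (wt_pos k).le
              apply pow_le_pow_left₀ (by positivity)
              have : (r:ℝ) ≤ L := by exact_mod_cast (by omega : r ≤ L)
              linarith
            have e4 := wt_le_four i
            gcongr <;> first
              | exact e2
              | exact e3
              | exact e4
              | exact (wt_pos _).le
              | exact pow_nonneg hA0 _
              | exact pow_nonneg hc0 _
              | exact mul_nonneg (mul_nonneg (mul_nonneg (pow_nonneg hA0 _) (pow_nonneg hc0 _))
                  (by positivity)) (mul_nonneg (by norm_num) (wt_pos _).le)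
              | positivity
        _ = B := by rw [hB]; ring
    · rw [if_neg hgu]; exact hB0
  have hgb : gsum L (sliceS P n i) m i k ≤ ((L:ℝ)+1) * (2*(L:ℝ)+1) * B := by
    calc gsum L (sliceS P n i) m i k
        ≤ ∑ r ∈ Finset.range (L+1), ∑ s ∈ Finset.range (2*L+1), B := by
          apply Finset.sum_le_sum
          intro r hr
          apply Finset.sum_le_sum
          intro s hs
          exact hterm r hr s hs
      _ = ((L:ℝ)+1) * (2*(L:ℝ)+1) * B := by
          rw [Finset.sum_const, Finset.sum_const, Finset.card_range, Finset.card_range]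
          push_cast [nsmul_eq_mul]
          ring
  calc ‖cf3 m i k (substOps P (sliceS P n i))‖
      ≤ C * gsum L (sliceS P n i) m i k := h3 (sliceS P n i) m i k
    _ ≤ C * (((L:ℝ)+1) * (2*(L:ℝ)+1) * B) := mul_le_mul_of_nonneg_left hgb hC0
    _ = K1 L C * (A^i * c^k * ((i:ℝ)+2)^k * wt (i+1) * wt k) := by
        rw [hB]
        unfold K1
        ring

end MainBound
end RS

namespace RS
open MvPowerSeries Finset

section MainBound2
variable (P : FreeAlgebra ℂ (Fin 2)) (n L : ℕ) (C : ℝ)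

lemma fact_eps_c (hL : 1 ≤ L) : epsB n L * cB n L = 1/128 := by
  have hc : (0:ℝ) < cB n L := lt_of_lt_of_le one_pos (cB_one n L hL)
  unfold epsB
  field_simp

lemma fact_4K1 (hL : 1 ≤ L) (hC0 : 0 ≤ C) :
    4 * K1 L C ≤ epsB n L * AB L C * cB n L := by
  have h1 : epsB n L * AB L C * cB n L = AB L C * (epsB n L * cB n L) := by ring
  rw [h1, fact_eps_c n L hL]
  unfold AB
  nlinarith [K1_nonneg L C hC0]

lemma fact_2K1 (hC0 : 0 ≤ C) : 2 * K1 L C ≤ AB L C := by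
  unfold AB
  nlinarith [K1_nonneg L C hC0]

lemma norm_inv_sub_le (m : ℕ) (hmn : m ≠ n) : ‖((m:ℂ) - n)⁻¹‖ ≤ 1 := by
  have h1le : (1:ℝ) ≤ ‖(m:ℂ) - (n:ℂ)‖ := by
    rcases Nat.lt_or_ge m n with h | h
    · rw [norm_sub_rev]
      have he : ((n:ℂ) - m) = ((n - m : ℕ) : ℂ) := by
        rw [Nat.cast_sub (le_of_lt h)]
      rw [he, Complex.norm_natCast]
      exact_mod_cast (by omega : 1 ≤ n - m)
    · have hgt : n < m := by omega
      have he : ((m:ℂ) - n) = ((m - n : ℕ) : ℂ) := by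
        rw [Nat.cast_sub (le_of_lt hgt)]
      rw [he, Complex.norm_natCast]
      exact_mod_cast (by omega : 1 ≤ m - n)
  rw [norm_inv]
  exact inv_le_one_of_one_le₀ h1le

lemma conv_Icc (i : ℕ) : ∑ i' ∈ Finset.Icc 1 i, wt i' * wt (i+1-i') ≤ 8 * wt (i+1) := by
  calc ∑ i' ∈ Finset.Icc 1 i, wt i' * wt (i+1-i')
      ≤ ∑ i' ∈ Finset.range (i+1+1), wt i' * wt (i+1-i') := by
        apply Finset.sum_le_sum_of_subset_of_nonneg
        · intro x hx
          rw [Finset.mem_Icc] at hx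
          rw [Finset.mem_range]
          omega
        · intro x _ _
          exact mul_nonneg (wt_pos x).le (wt_pos _).le
    _ ≤ 8 * wt (i+1) := conv8 (i+1)

lemma conv_rng (k : ℕ) : ∑ k' ∈ Finset.range (k+2), wt k' * wt (k+1-k') ≤ 8 * wt (k+1) := by
  rw [show k+2 = k+1+1 by omega]
  exact conv8 (k+1)

theorem master (hL : 1 ≤ L) (hC0 : 0 ≤ C) (h3 : P3 (substOps P) L C) : ∀ i,
    (∀ m k, ‖psiC P n m i k‖
      ≤ AB L C ^ i * cB n L ^ k * ((i:ℝ)+1)^k * wt i * wt k) ∧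
    (1 ≤ i → ∀ k, ‖EC P n i k‖
      ≤ epsB n L * AB L C ^ i * cB n L ^ k * ((i:ℝ)+1)^(k-1) * wt i * wt k) := by
  have hA0 : (0:ℝ) ≤ AB L C := le_trans zero_le_one (AB_one L C hC0)
  have hc0 : (0:ℝ) ≤ cB n L := le_trans zero_le_one (cB_one n L hL)
  have hε0 : (0:ℝ) < epsB n L := epsB_pos n L hL
  intro i
  induction i using Nat.strong_induction_on with
  | _ i ih =>
    match i with
    | 0 =>
        refine ⟨?_, fun hi => by omega⟩
        intro m k
        rw [psiC_zero]
        by_cases h : m = n ∧ k = 0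
        · rw [if_pos h, h.2, norm_one, pow_zero, pow_zero, pow_zero, wt_zero]
          norm_num
        · rw [if_neg h, norm_zero]
          exact bnd_nonneg hA0 hc0 (by positivity) 0 k 0 k
    | (i+1) =>
        have hψi := (ih i (by omega)).1
        have hcast : ((i+1:ℕ):ℝ) + 1 = (i:ℝ) + 2 := by push_cast; ring
        constructor
        · -- ψ bound at level i+1
          intro m k
          rw [hcast]
          have trgnn : 0 ≤ AB L C ^ (i+1) * cB n L ^ k * ((i:ℝ)+2)^k * wt (i+1) * wt k :=
            bnd_nonneg hA0 hc0 (by positivity) (i+1) k (i+1) k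
          by_cases hm1 : n + (i+1)*L < m
          · rw [support_bound P n L C h3 (i+1) m k hm1, norm_zero]
            exact trgnn
          by_cases hmn : m = n
          · rw [psiC_succ, if_pos hmn, norm_zero]
            exact trgnn
          rw [psiC_succ, if_neg hmn, norm_mul]
          have hTc : ‖cf3 m i k (substOps P (sliceS P n i))‖
              ≤ K1 L C * (AB L C ^ i * cB n L ^ k * ((i:ℝ)+2)^k * wt (i+1) * wt k) :=
            Tbound P n L C hL hC0 h3 i k m hψi (by omega)
          -- bound the double sum
          set S := ∑ i' ∈ Finset.Icc 1 i, ∑ k' ∈ Finset.range (k+2),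
            EC P n i' k' * psiC P n m (i+1-i') (k+1-k') with hSdef
          have hS : ‖S‖ ≤ (1/2) * (AB L C ^ (i+1) * cB n L ^ k * ((i:ℝ)+2)^k
              * wt (i+1) * wt k) := by
            have tri : ‖S‖ ≤ ∑ i' ∈ Finset.Icc 1 i, ∑ k' ∈ Finset.range (k+2),
                ‖EC P n i' k'‖ * ‖psiC P n m (i+1-i') (k+1-k')‖ := by
              refine le_trans (norm_sum_le _ _) (Finset.sum_le_sum fun i' _ => ?_)
              refine le_trans (norm_sum_le _ _) (Finset.sum_le_sum fun k' _ => ?_)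
              rw [norm_mul]
            have termb : ∀ i' ∈ Finset.Icc 1 i, ∀ k' ∈ Finset.range (k+2),
                ‖EC P n i' k'‖ * ‖psiC P n m (i+1-i') (k+1-k')‖
                ≤ (epsB n L * AB L C ^ (i+1) * cB n L ^ (k+1) * ((i:ℝ)+2)^k)
                  * ((wt i' * wt (i+1-i')) * (wt k' * wt (k+1-k'))) := by
              intro i' hi' k' hk'
              rw [Finset.mem_Icc] at hi'
              rw [Finset.mem_range] at hk'
              have hrhs0 : 0 ≤ (epsB n L * AB L C ^ (i+1) * cB n L ^ (k+1) * ((i:ℝ)+2)^k)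
                  * ((wt i' * wt (i+1-i')) * (wt k' * wt (k+1-k'))) := by
                apply mul_nonneg
                · exact mul_nonneg (mul_nonneg (mul_nonneg hε0.le (pow_nonneg hA0 _))
                    (pow_nonneg hc0 _)) (by positivity)
                · exact mul_nonneg (mul_nonneg (wt_pos _).le (wt_pos _).le)
                    (mul_nonneg (wt_pos _).le (wt_pos _).le)
              rcases Nat.eq_zero_or_pos k' with hk0 | hk0
              · have hEz : EC P n i' k' = 0 := by rw [hk0]; exact EC_k0 P n i'
                rw [hEz, norm_zero, zero_mul]
                exact hrhs0
              · have b1 := (ih i' (by omega)).2 hi'.1 k'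
                have b2 := (ih (i+1-i') (by omega)).1 m (k+1-k')
                calc ‖EC P n i' k'‖ * ‖psiC P n m (i+1-i') (k+1-k')‖
                    ≤ (epsB n L * AB L C ^ i' * cB n L ^ k' * ((i':ℝ)+1)^(k'-1)
                        * wt i' * wt k')
                      * (AB L C ^ (i+1-i') * cB n L ^ (k+1-k')
                        * (((i+1-i':ℕ):ℝ)+1)^(k+1-k') * wt (i+1-i') * wt (k+1-k')) := by
                      apply mul_le_mul b1 b2 (norm_nonneg _)
                      exact le_trans (norm_nonneg _) b1
                  _ = epsB n L * (AB L C ^ i' * AB L C ^ (i+1-i'))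
                      * (cB n L ^ k' * cB n L ^ (k+1-k'))
                      * (((i':ℝ)+1)^(k'-1) * ((((i+1-i':ℕ):ℝ))+1)^(k+1-k'))
                      * (wt i' * wt (i+1-i')) * (wt k' * wt (k+1-k')) := by ring
                  _ = epsB n L * AB L C ^ (i+1) * cB n L ^ (k+1)
                      * (((i':ℝ)+1)^(k'-1) * ((((i+1-i':ℕ):ℝ))+1)^(k+1-k'))
                      * (wt i' * wt (i+1-i')) * (wt k' * wt (k+1-k')) := by
                      rw [← pow_add, ← pow_add, show i' + (i+1-i') = i+1 by omega,
                        show k' + (k+1-k') = k+1 by omega]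
                  _ ≤ epsB n L * AB L C ^ (i+1) * cB n L ^ (k+1)
                      * ((i:ℝ)+2)^k
                      * (wt i' * wt (i+1-i')) * (wt k' * wt (k+1-k')) := by
                      have hpow : ((i':ℝ)+1)^(k'-1) * ((((i+1-i':ℕ):ℝ))+1)^(k+1-k')
                          ≤ ((i:ℝ)+2)^k := by
                        have hb1 : ((i':ℝ)+1) ≤ (i:ℝ)+2 := by
                          have : (i':ℝ) ≤ i := by exact_mod_cast hi'.2
                          linarith
                        have hb2 : (((i+1-i':ℕ):ℝ)+1) ≤ (i:ℝ)+2 := by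
                          have h5 : ((i+1-i':ℕ):ℝ) ≤ ((i:ℕ):ℝ)+1 := by
                            exact_mod_cast (by omega : i+1-i' ≤ i+1)
                          linarith
                        calc ((i':ℝ)+1)^(k'-1) * ((((i+1-i':ℕ):ℝ))+1)^(k+1-k')
                            ≤ ((i:ℝ)+2)^(k'-1) * ((i:ℝ)+2)^(k+1-k') := by
                              apply mul_le_mul (pow_le_pow_left₀ (by positivity) hb1 _)
                                (pow_le_pow_left₀ (by positivity) hb2 _)
                                (by positivity) (by positivity)
                          _ = ((i:ℝ)+2)^((k'-1) + (k+1-k')) := (pow_add _ _ _).symm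
                          _ = ((i:ℝ)+2)^k := by
                              rw [show (k'-1) + (k+1-k') = k by omega]
                      gcongr <;> first
                        | exact hpow
                        | exact (wt_pos _).le
                        | exact mul_nonneg (wt_pos _).le (wt_pos _).le
                        | exact mul_nonneg (mul_nonneg hε0.le (pow_nonneg hA0 _))
                            (pow_nonneg hc0 _)
                        | positivity
                  _ = (epsB n L * AB L C ^ (i+1) * cB n L ^ (k+1) * ((i:ℝ)+2)^k)
                      * ((wt i' * wt (i+1-i')) * (wt k' * wt (k+1-k'))) := by ring
            have hfac : (∑ i' ∈ Finset.Icc 1 i, ∑ k' ∈ Finset.range (k+2),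
                (epsB n L * AB L C ^ (i+1) * cB n L ^ (k+1) * ((i:ℝ)+2)^k)
                  * ((wt i' * wt (i+1-i')) * (wt k' * wt (k+1-k'))))
                = (epsB n L * AB L C ^ (i+1) * cB n L ^ (k+1) * ((i:ℝ)+2)^k)
                  * ((∑ i' ∈ Finset.Icc 1 i, wt i' * wt (i+1-i'))
                    * (∑ k' ∈ Finset.range (k+2), wt k' * wt (k+1-k'))) := by
              rw [Finset.sum_mul_sum, Finset.mul_sum]
              refine Finset.sum_congr rfl fun i' _ => ?_
              rw [Finset.mul_sum]
            have hconst0 : 0 ≤ epsB n L * AB L C ^ (i+1) * cB n L ^ (k+1) * ((i:ℝ)+2)^k :=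
              mul_nonneg (mul_nonneg (mul_nonneg hε0.le (pow_nonneg hA0 _))
                (pow_nonneg hc0 _)) (by positivity)
            calc ‖S‖ ≤ _ := tri
              _ ≤ (∑ i' ∈ Finset.Icc 1 i, ∑ k' ∈ Finset.range (k+2),
                  (epsB n L * AB L C ^ (i+1) * cB n L ^ (k+1) * ((i:ℝ)+2)^k)
                    * ((wt i' * wt (i+1-i')) * (wt k' * wt (k+1-k')))) := by
                  apply Finset.sum_le_sum
                  intro i' hi'
                  apply Finset.sum_le_sum
                  intro k' hk'
                  exact termb i' hi' k' hk'
              _ = _ := hfac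
              _ ≤ (epsB n L * AB L C ^ (i+1) * cB n L ^ (k+1) * ((i:ℝ)+2)^k)
                  * ((8 * wt (i+1)) * (8 * wt (k+1))) := by
                  apply mul_le_mul_of_nonneg_left _ hconst0
                  apply mul_le_mul (conv_Icc i) (conv_rng k)
                  · apply Finset.sum_nonneg
                    intro k' _
                    exact mul_nonneg (wt_pos _).le (wt_pos _).le
                  · exact mul_nonneg (by norm_num) (wt_pos _).le
              _ ≤ (epsB n L * AB L C ^ (i+1) * cB n L ^ (k+1) * ((i:ℝ)+2)^k)
                  * ((8 * wt (i+1)) * (8 * wt k)) := by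
                  apply mul_le_mul_of_nonneg_left _ hconst0
                  apply mul_le_mul_of_nonneg_left _
                    (mul_nonneg (by norm_num) (wt_pos _).le)
                  apply mul_le_mul_of_nonneg_left (wt_anti (by omega)) (by norm_num)
              _ = (64 * (epsB n L * cB n L))
                  * (AB L C ^ (i+1) * cB n L ^ k * ((i:ℝ)+2)^k * wt (i+1) * wt k) := by
                  rw [pow_succ]
                  ring
              _ = (1/2) * (AB L C ^ (i+1) * cB n L ^ k * ((i:ℝ)+2)^k
                  * wt (i+1) * wt k) := by
                  rw [fact_eps_c n L hL]
                  norm_num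
          calc ‖((m:ℂ) - n)⁻¹‖ * ‖S - cf3 m i k (substOps P (sliceS P n i))‖
              ≤ 1 * (‖S‖ + ‖cf3 m i k (substOps P (sliceS P n i))‖) := by
                apply mul_le_mul (norm_inv_sub_le n m hmn) (norm_sub_le _ _)
                  (norm_nonneg _) zero_le_one
            _ = ‖S‖ + ‖cf3 m i k (substOps P (sliceS P n i))‖ := one_mul _
            _ ≤ (1/2) * (AB L C ^ (i+1) * cB n L ^ k * ((i:ℝ)+2)^k * wt (i+1) * wt k)
                + K1 L C * (AB L C ^ i * cB n L ^ k * ((i:ℝ)+2)^k * wt (i+1) * wt k) :=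
                add_le_add hS hTc
            _ ≤ (1/2) * (AB L C ^ (i+1) * cB n L ^ k * ((i:ℝ)+2)^k * wt (i+1) * wt k)
                + (1/2) * (AB L C ^ (i+1) * cB n L ^ k * ((i:ℝ)+2)^k * wt (i+1) * wt k) := by
                apply add_le_add_right
                have hy : 0 ≤ cB n L ^ k * ((i:ℝ)+2)^k * wt (i+1) * wt k :=
                  mul_nonneg (mul_nonneg (mul_nonneg (pow_nonneg hc0 k) (by positivity))
                    (wt_pos _).le) (wt_pos _).le
                have h2K := fact_2K1 L C hC0
                calc K1 L C * (AB L C ^ i * cB n L ^ k * ((i:ℝ)+2)^k * wt (i+1) * wt k)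
                    = (K1 L C * AB L C ^ i)
                      * (cB n L ^ k * ((i:ℝ)+2)^k * wt (i+1) * wt k) := by ring
                  _ ≤ ((1/2) * AB L C ^ (i+1))
                      * (cB n L ^ k * ((i:ℝ)+2)^k * wt (i+1) * wt k) := by
                      apply mul_le_mul_of_nonneg_right _ hy
                      rw [pow_succ]
                      calc K1 L C * AB L C ^ i ≤ ((1/2) * AB L C) * AB L C ^ i := by
                            apply mul_le_mul_of_nonneg_right _ (pow_nonneg hA0 i)
                            linarith
                        _ = 1/2 * (AB L C ^ i * AB L C) := by ring
                  _ = (1/2) * (AB L C ^ (i+1) * cB n L ^ k * ((i:ℝ)+2)^k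
                      * wt (i+1) * wt k) := by ring
            _ = AB L C ^ (i+1) * cB n L ^ k * ((i:ℝ)+2)^k * wt (i+1) * wt k := by ring
        · -- E bound at level i+1
          intro _ k
          rw [hcast]
          cases k with
          | zero =>
              rw [EC_k0, norm_zero]
              exact mul_nonneg (mul_nonneg (mul_nonneg (mul_nonneg (mul_nonneg hε0.le
                (pow_nonneg hA0 _)) (pow_nonneg hc0 _)) (by positivity)) (wt_pos _).le)
                (wt_pos _).le
          | succ k0 =>
              rw [EC_succ, if_neg (Nat.succ_ne_zero k0)]
              have hT := Tbound P n L C hL hC0 h3 i (k0+1-1) n hψi (by omega)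
              rw [show k0+1-1 = k0 from rfl] at hT
              calc ‖cf3 n i k0 (substOps P (sliceS P n i))‖
                  ≤ K1 L C * (AB L C ^ i * cB n L ^ k0 * ((i:ℝ)+2)^k0
                    * wt (i+1) * wt k0) := hT
                _ ≤ K1 L C * (AB L C ^ i * cB n L ^ k0 * ((i:ℝ)+2)^k0
                    * wt (i+1) * (4 * wt (k0+1))) := by
                    apply mul_le_mul_of_nonneg_left _ (K1_nonneg L C hC0)
                    apply mul_le_mul_of_nonneg_left (wt_le_four k0)
                    exact mul_nonneg (mul_nonneg (mul_nonneg (pow_nonneg hA0 _)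
                      (pow_nonneg hc0 _)) (by positivity)) (wt_pos _).le
                _ = (4 * K1 L C) * (AB L C ^ i * cB n L ^ k0 * ((i:ℝ)+2)^k0
                    * wt (i+1) * wt (k0+1)) := by ring
                _ ≤ (epsB n L * AB L C * cB n L) * (AB L C ^ i * cB n L ^ k0
                    * ((i:ℝ)+2)^k0 * wt (i+1) * wt (k0+1)) := by
                    apply mul_le_mul_of_nonneg_right (fact_4K1 n L C hL hC0)
                    exact mul_nonneg (mul_nonneg (mul_nonneg (mul_nonneg
                      (pow_nonneg hA0 _) (pow_nonneg hc0 _)) (by positivity))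
                      (wt_pos _).le) (wt_pos _).le
                _ = epsB n L * AB L C ^ (i+1) * cB n L ^ (k0+1) * ((i:ℝ)+2)^((k0+1)-1)
                    * wt (i+1) * wt (k0+1) := by
                    rw [show (k0+1)-1 = k0 from rfl, pow_succ, pow_succ]
                    ring

end MainBound2
end RS

namespace RS
open MvPowerSeries Finset

section Final
variable (P : FreeAlgebra ℂ (Fin 2)) (n : ℕ)

lemma degOf_eq (d : Fin 3 →₀ ℕ) : degOf d = d 0 + d 1 + d 2 := by
  show d.sum (fun _ n => n) = _
  conv_lhs => rw [← e3_eta d]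
  exact degOf_e3 _ _ _

lemma ES_t0 : ∀ d : Fin 3 →₀ ℕ, d 1 = 0 →
    MvPowerSeries.coeff (R := ℂ) d (ES P n) = if d = Finsupp.single 2 1 then (n:ℂ) else 0 := by
  intro d hd1
  show (if d 0 = 0 then EC P n (d 1) (d 2) else 0) = _
  by_cases hd0 : d 0 = 0
  · rw [if_pos hd0, hd1, EC_zero]
    by_cases h2 : d 2 = 1
    · rw [if_pos h2, if_pos]
      rw [← e3_eta d, hd0, hd1, h2, single2]
    · rw [if_neg h2, if_neg]
      intro hc
      apply h2
      rw [← e3_eta d, single2] at hc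
      exact (e3_inj hc).2.2
  · rw [if_neg hd0, if_neg]
    intro hc
    apply hd0
    rw [← e3_eta d, single2] at hc
    exact (e3_inj hc).1

lemma hfree_conv : IsConv (hfree 2 (ES P n)) := by
  refine ⟨0, 1, one_pos, ?_⟩
  intro d
  have hz : MvPowerSeries.coeff (R := ℂ) d (hfree 2 (ES P n)) = 0 := by
    show (if d 2 = 0 then MvPowerSeries.coeff (R := ℂ) d (ES P n) else 0) = 0
    by_cases h2 : d 2 = 0
    · rw [if_pos h2]
      show (if d 0 = 0 then EC P n (d 1) (d 2) else 0) = 0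
      by_cases h0 : d 0 = 0
      · rw [if_pos h0, h2, EC_k0]
      · rw [if_neg h0]
    · rw [if_neg h2]
  rw [hz, norm_zero, zero_mul]

lemma EShb (d : Fin 3 →₀ ℕ) : MvPowerSeries.coeff (R := ℂ) d (hborel 2 (ES P n))
    = (1/((d 2).factorial) : ℂ) * (if d 0 = 0 then EC P n (d 1) (d 2 + 1) else 0) := by
  show (1 / ((d 2).factorial) : ℂ) *
    MvPowerSeries.coeff (R := ℂ) (d + Finsupp.single 2 1) (ES P n) = _
  congr 1
  have he : d + Finsupp.single 2 1 = e3 (d 0) (d 1) (d 2 + 1) := by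
    conv_lhs => rw [← e3_eta d, single2, e3_add]
    norm_num
  rw [he]
  show (if (e3 (d 0) (d 1) (d 2 + 1)) 0 = 0
      then EC P n ((e3 (d 0) (d 1) (d 2 + 1)) 1) ((e3 (d 0) (d 1) (d 2 + 1)) 2) else 0) = _
  rw [e3_apply0, e3_apply1, e3_apply2]

lemma hborel_conv : IsConv (hborel 2 (ES P n)) := by
  obtain ⟨hp1, L, C, hL, hC0, h3⟩ := tame_substOps P
  have hbnd := master P n L C hL hC0 h3
  have hA0 : (0:ℝ) ≤ AB L C := le_trans zero_le_one (AB_one L C hC0)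
  have hc0 : (0:ℝ) ≤ cB n L := le_trans zero_le_one (cB_one n L hL)
  have hc1 : (1:ℝ) ≤ cB n L := cB_one n L hL
  have hε0 : (0:ℝ) < epsB n L := epsB_pos n L hL
  have hexp0 : (0:ℝ) < Real.exp 1 := Real.exp_pos 1
  set R : ℝ := max (AB L C * Real.exp 1) (cB n L) with hR
  set C' : ℝ := epsB n L * cB n L * Real.exp 1 + n with hC'
  have hR1 : (1:ℝ) ≤ R := le_trans hc1 (le_max_right _ _)
  have hR0 : (0:ℝ) < R := lt_of_lt_of_le one_pos hR1
  have hC'0 : (0:ℝ) ≤ C' := by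
    rw [hC']
    have hn : (0:ℝ) ≤ (n:ℝ) := Nat.cast_nonneg n
    nlinarith [mul_nonneg (mul_nonneg hε0.le hc0) hexp0.le]
  refine ⟨C', R, hR0, ?_⟩
  intro d
  rw [EShb]
  have hdeg : degOf d = d 0 + d 1 + d 2 := degOf_eq d
  by_cases hd0 : d 0 = 0
  · rw [if_pos hd0]
    rw [norm_mul, norm_div, norm_one, Complex.norm_natCast]
    rcases Nat.eq_zero_or_pos (d 1) with hi0 | hi0
    · rw [hi0, EC_zero]
      by_cases h2 : d 2 + 1 = 1
      · have h20 : d 2 = 0 := by omega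
        rw [if_pos h2, Complex.norm_natCast, h20]
        simp only [Nat.factorial_zero, Nat.cast_one, div_one, one_mul]
        calc (n:ℝ) ≤ C' := by
              rw [hC']
              nlinarith [mul_nonneg (mul_nonneg hε0.le hc0) hexp0.le]
          _ = C' * R ^ degOf d := by
              rw [hdeg, hd0, hi0, h20]
              norm_num
      · rw [if_neg h2, norm_zero, mul_zero]
        positivity
    · have hE := (hbnd (d 1)).2 hi0 (d 2 + 1)
      have hE2 : ‖EC P n (d 1) (d 2 + 1)‖
          ≤ epsB n L * AB L C ^ (d 1) * cB n L ^ (d 2 + 1) * (((d 1):ℝ)+1)^(d 2) := by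
        refine le_trans hE ?_
        rw [show (d 2 + 1) - 1 = d 2 from rfl]
        calc epsB n L * AB L C ^ (d 1) * cB n L ^ (d 2 + 1) * (((d 1):ℝ)+1)^(d 2)
              * wt (d 1) * wt (d 2 + 1)
            ≤ epsB n L * AB L C ^ (d 1) * cB n L ^ (d 2 + 1) * (((d 1):ℝ)+1)^(d 2)
              * 1 * 1 := by
              apply mul_le_mul
              · apply mul_le_mul_of_nonneg_left (wt_le_one _)
                exact mul_nonneg (mul_nonneg (mul_nonneg hε0.le (pow_nonneg hA0 _))
                  (pow_nonneg hc0 _)) (by positivity)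
              · exact wt_le_one _
              · exact (wt_pos _).le
              · exact mul_nonneg (mul_nonneg (mul_nonneg (mul_nonneg hε0.le
                  (pow_nonneg hA0 _)) (pow_nonneg hc0 _)) (by positivity)) zero_le_one
          _ = epsB n L * AB L C ^ (d 1) * cB n L ^ (d 2 + 1) * (((d 1):ℝ)+1)^(d 2) := by
              ring
      have hfac : (0:ℝ) < ((d 2).factorial : ℝ) := by
        exact_mod_cast Nat.factorial_pos (d 2)
      have hpowk : (((d 1):ℝ)+1)^(d 2) ≤ ((d 2).factorial : ℝ) * Real.exp (((d 1):ℝ)+1) := by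
        have h := Real.pow_div_factorial_le_exp (x := ((d 1):ℝ)+1) (by positivity) (d 2)
        rw [div_le_iff₀ hfac] at h
        linarith [h]
      have hexpi : Real.exp (((d 1):ℝ)+1) = Real.exp 1 ^ (d 1) * Real.exp 1 := by
        rw [Real.exp_add]
        congr 1
        rw [← Real.exp_nat_mul]
        norm_num
      calc 1 / ((d 2).factorial : ℝ) * ‖EC P n (d 1) (d 2 + 1)‖
          ≤ 1 / ((d 2).factorial : ℝ) *
            (epsB n L * AB L C ^ (d 1) * cB n L ^ (d 2 + 1) * (((d 1):ℝ)+1)^(d 2)) := by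
            apply mul_le_mul_of_nonneg_left hE2 (by positivity)
        _ ≤ 1 / ((d 2).factorial : ℝ) *
            (epsB n L * AB L C ^ (d 1) * cB n L ^ (d 2 + 1) *
              (((d 2).factorial : ℝ) * Real.exp (((d 1):ℝ)+1))) := by
            apply mul_le_mul_of_nonneg_left _ (by positivity)
            apply mul_le_mul_of_nonneg_left hpowk
            exact mul_nonneg (mul_nonneg hε0.le (pow_nonneg hA0 _)) (pow_nonneg hc0 _)
        _ = epsB n L * AB L C ^ (d 1) * cB n L ^ (d 2 + 1) * Real.exp (((d 1):ℝ)+1) := by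
            field_simp
        _ = (epsB n L * cB n L * Real.exp 1) *
            ((AB L C * Real.exp 1) ^ (d 1) * cB n L ^ (d 2)) := by
            rw [hexpi, mul_pow, pow_succ]
            ring
        _ ≤ C' * (R ^ (d 1) * R ^ (d 2)) := by
            apply mul_le_mul
            · rw [hC']
              exact le_add_of_nonneg_right (Nat.cast_nonneg n)
            · apply mul_le_mul (pow_le_pow_left₀ (by positivity) (le_max_left _ _) _)
                (pow_le_pow_left₀ hc0 (le_max_right _ _) _) (pow_nonneg hc0 _)
                (pow_nonneg (le_of_lt hR0) _)
            · exact mul_nonneg (pow_nonneg (by positivity) _) (pow_nonneg hc0 _)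
            · exact hC'0
        _ = C' * R ^ degOf d := by
            rw [hdeg, hd0, zero_add, ← pow_add]
  · rw [if_neg hd0, mul_zero, norm_zero]
    positivity

theorem final_theorem :
    (∃! p : MvPowerSeries (Fin 3) ℂ × MvPowerSeries (Fin 3) ℂ, RSCond P n p) ∧
    ∀ p : MvPowerSeries (Fin 3) ℂ × MvPowerSeries (Fin 3) ℂ, RSCond P n p →
      (∀ d : Fin 3 →₀ ℕ, d 1 = 0 →
        MvPowerSeries.coeff (R := ℂ) d p.1 =
          if d = Finsupp.single 2 1 then (n : ℂ) else 0) ∧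
      BorelAnalytic 2 p.1 := by
  constructor
  · exact ⟨(ES P n, PsiS P n), RSCond_construct P n, fun p hp => RS_unique P n p hp⟩
  · intro p hp
    have hp1 : p.1 = ES P n := congrArg Prod.fst (RS_unique P n p hp)
    rw [hp1]
    exact ⟨ES_t0 P n, hborel_conv P n, hfree_conv P n⟩

end Final
end RS

/-- **Gevrey convergence of the Rayleigh–Schrödinger expansions** for polynomial
perturbations `H_t = a†a + ℏtP(a,a†)` of the harmonic oscillator: for every `n` there
are a unique eigenvalue `E ∈ ℂ[[t,ℏ]]` and a unique normalized eigenvector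
`ψ ∈ ℂ[[z,t,ℏ]]` with `ψ|_{t=0} = zⁿ`; moreover `E|_{t=0} = nℏ` and `E` is of Gevrey
class in `ℏ`: its `ℏ`-Borel transform and its `ℏ`-free part are convergent in a
neighbourhood of `0 ∈ ℂ²`. -/
theorem rayleigh_schrodinger_gevrey (P : FreeAlgebra ℂ (Fin 2)) (n : ℕ) :
    (∃! p : MvPowerSeries (Fin 3) ℂ × MvPowerSeries (Fin 3) ℂ, RSCond P n p) ∧
    ∀ p : MvPowerSeries (Fin 3) ℂ × MvPowerSeries (Fin 3) ℂ, RSCond P n p →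
      (∀ d : Fin 3 →₀ ℕ, d 1 = 0 →
        MvPowerSeries.coeff (R := ℂ) d p.1 =
          if d = Finsupp.single 2 1 then (n : ℂ) else 0) ∧
      BorelAnalytic 2 p.1 := by
  exact RS.final_theorem P n
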